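/- arXiv:2302.12105 — 7 statements merged into one kernel-verified Lean document; each statement's English description precedes it below -/
import Mathlib

section
/- Let f(x) = g(x) + γ|x|₁ where g : ℝⁿ → ℝ is convex, C¹, with L-Lipschitz gradient, and γ > 0. Fix x ∈ ℝⁿ and let αₓ⁺ = {i : xᵢ > 0}, αₓ⁻ = {i : xᵢ < 0}, βₓ = {i : xᵢ = 0}. Suppose v ∈ ℝⁿ satisfies: xᵢ + vᵢ ≥ 0 for i ∈ αₓ⁺; xᵢ + vᵢ ≤ 0 for i ∈ αₓ⁻; vᵢ = 0 for i ∈ βₓ with ∂ᵢ⁻f(x) = 0; vᵢ ≥ 0 for i ∈ βₓ with ∂ᵢ⁻f(x) < 0; vᵢ ≤ 0 for i ∈ βₓ with ∂ᵢ⁻f(x) > 0. Then f(x + v) ≤ f(x) + ⟨∂⁻f(x), v⟩ + (L/2)|v|₂². -/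
open scoped RealInnerProductSpace BigOperators
open scoped Classical

noncomputable section

abbrev E (n : ℕ) := EuclideanSpace ℝ (Fin n)

/-- The convex-analysis subdifferential. -/
def subdiff {n : ℕ} (f : E n → ℝ) (x : E n) : Set (E n) :=
  {y | ∀ z, f z ≥ f x + (inner ℝ y (z - x) : ℝ)}

/-- `v` is the minimal-Euclidean-norm element of `∂f(x)`. -/
def IsMinNormSubgrad {n : ℕ} (f : E n → ℝ) (x v : E n) : Prop :=
  v ∈ subdiff f x ∧ ∀ y ∈ subdiff f x, ‖v‖ ≤ ‖y‖

/-- μ-strong convexity: `x ↦ f x - μ/2 ‖x‖²` is convex. -/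
def StronglyConvex {n : ℕ} (μ : ℝ) (f : E n → ℝ) : Prop :=
  ConvexOn ℝ Set.univ (fun x => f x - μ / 2 * ‖x‖ ^ 2)

open scoped Topology
open Filter

lemma rin {n : ℕ} (u v : E n) : (inner ℝ u v : ℝ) = ∑ i, u i * v i := by
  simp [PiLp.inner_apply, RCLike.inner_apply, mul_comm]

lemma aux_nonpos {c M δ : ℝ} (hδ : 0 < δ)
    (h : ∀ t : ℝ, 0 < t → t < δ → c ≤ M * t) : c ≤ 0 := by
  have hlim : Tendsto (fun t : ℝ => M * t) (𝓝[>] (0:ℝ)) (𝓝 0) := by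
    have h1 : Tendsto (fun t : ℝ => M * t) (𝓝 0) (𝓝 (M * 0)) :=
      (continuous_const.mul continuous_id).tendsto 0
    simpa using h1.mono_left nhdsWithin_le_nhds
  refine ge_of_tendsto hlim ?_
  filter_upwards [Ioo_mem_nhdsGT_of_mem (Set.mem_Ico.2 ⟨le_refl 0, hδ⟩)] with t ht
  exact h t ht.1 ht.2

lemma coord_ineq {γ s xj zj : ℝ} (h1 : |s| ≤ γ) (h2 : s * xj = γ * |xj|) :
    s * (zj - xj) ≤ γ * |zj| - γ * |xj| := by
  have h3 : s * zj ≤ γ * |zj| :=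
    calc s * zj ≤ |s * zj| := le_abs_self _
    _ = |s| * |zj| := abs_mul s zj
    _ ≤ γ * |zj| := mul_le_mul_of_nonneg_right h1 (abs_nonneg _)
  have h4 : s * (zj - xj) = s * zj - s * xj := by ring
  linarith

lemma line_deriv {n : ℕ} (g : E n → ℝ) (g' : E n → E n)
    (hg' : ∀ x, HasGradientAt g (g' x) x) (y d : E n) (t : ℝ) :
    HasDerivAt (fun s : ℝ => g (y + s • d)) (inner ℝ (g' (y + t • d)) d : ℝ) t := by
  have hline : HasDerivAt (fun s : ℝ => y + s • d) d t := by
    simpa using ((hasDerivAt_id t).smul_const d).const_add y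
  have hF := (hg' (y + t • d)).hasFDerivAt
  have h := hF.comp_hasDerivAt t hline
  simp only [InnerProductSpace.toDual_apply_apply] at h
  exact h

/-- first-order condition of convexity -/
lemma foc {n : ℕ} (g : E n → ℝ) (hgc : ConvexOn ℝ Set.univ g) (g' : E n → E n)
    (hg' : ∀ x, HasGradientAt g (g' x) x) (x z : E n) :
    g x + (inner ℝ (g' x) (z - x) : ℝ) ≤ g z := by
  set φ : ℝ → ℝ := fun s => g (x + s • (z - x)) with hφ
  have hconv : ConvexOn ℝ Set.univ φ := by
    have aff : ConvexOn ℝ ((fun s : ℝ => x + s • (z - x)) ⁻¹' Set.univ)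
        (g ∘ (AffineMap.lineMap x z : ℝ →ᵃ[ℝ] E n)) := by
      have := hgc.comp_affineMap (AffineMap.lineMap x z : ℝ →ᵃ[ℝ] E n)
      simpa using this
    have h2 : ConvexOn ℝ Set.univ (g ∘ (AffineMap.lineMap x z : ℝ →ᵃ[ℝ] E n)) := by
      simpa using aff
    have heq : φ = g ∘ (AffineMap.lineMap x z : ℝ →ᵃ[ℝ] E n) := by
      funext s
      simp [φ, AffineMap.lineMap_apply, add_comm]
    rw [heq]
    exact h2
  have hd : HasDerivAt φ (inner ℝ (g' x) (z - x) : ℝ) 0 := by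
    simpa using line_deriv g g' hg' x (z - x) 0
  have hslope := hconv.le_slope_of_hasDerivAt (Set.mem_univ 0) (Set.mem_univ 1)
      one_pos hd
  have hsl : (inner ℝ (g' x) (z - x) : ℝ) ≤ φ 1 - φ 0 := by
    simpa [slope_def_field] using hslope
  have h0 : φ 0 = g x := by simp [φ]
  have h1 : φ 1 = g z := by simp [φ]
  linarith

/-- descent lemma -/
lemma descent {n : ℕ} (g : E n → ℝ) (g' : E n → E n)
    (hg' : ∀ x, HasGradientAt g (g' x) x)
    (L : ℝ) (hLip : ∀ a b, ‖g' a - g' b‖ ≤ L * ‖a - b‖) (y d : E n) :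
    g (y + d) ≤ g y + (inner ℝ (g' y) d : ℝ) + L / 2 * ‖d‖ ^ 2 := by
  set ψ : ℝ → ℝ := fun t => g (y + t • d) - t * (inner ℝ (g' y) d : ℝ) - L / 2 * t ^ 2 * ‖d‖ ^ 2
    with hψ
  have hder : ∀ t : ℝ, HasDerivAt ψ
      ((inner ℝ (g' (y + t • d)) d : ℝ) - (inner ℝ (g' y) d : ℝ) - L * t * ‖d‖ ^ 2) t := by
    intro t
    have h1 := line_deriv g g' hg' y d t
    have h2 : HasDerivAt (fun t : ℝ => t * (inner ℝ (g' y) d : ℝ)) (inner ℝ (g' y) d : ℝ) t := by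
      simpa using (hasDerivAt_id t).mul_const (inner ℝ (g' y) d : ℝ)
    have h3 : HasDerivAt (fun t : ℝ => L / 2 * t ^ 2 * ‖d‖ ^ 2) (L * t * ‖d‖ ^ 2) t := by
      have := ((hasDerivAt_pow 2 t).const_mul (L / 2)).mul_const (‖d‖ ^ 2)
      refine this.congr_deriv ?_
      ring
    exact (h1.sub h2).sub h3
  have hmono : AntitoneOn ψ (Set.Icc (0:ℝ) 1) := by
    apply antitoneOn_of_deriv_nonpos (convex_Icc 0 1)
    · exact fun t _ => ((hder t).continuousAt).continuousWithinAt
    · exact fun t _ => ((hder t).differentiableAt).differentiableWithinAt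
    · intro t ht
      rw [interior_Icc] at ht
      rw [(hder t).deriv]
      have hb : (inner ℝ (g' (y + t • d)) d : ℝ) - (inner ℝ (g' y) d : ℝ)
          = (inner ℝ (g' (y + t • d) - g' y) d : ℝ) := by rw [inner_sub_left]
      have hc : (inner ℝ (g' (y + t • d) - g' y) d : ℝ) ≤ L * t * ‖d‖ ^ 2 := by
        calc (inner ℝ (g' (y + t • d) - g' y) d : ℝ) ≤ ‖g' (y + t • d) - g' y‖ * ‖d‖ :=
              real_inner_le_norm _ _
          _ ≤ (L * ‖(y + t • d) - y‖) * ‖d‖ := by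
              have := hLip (y + t • d) y
              nlinarith [norm_nonneg d]
          _ = L * t * ‖d‖ ^ 2 := by
              rw [add_sub_cancel_left, norm_smul]
              simp [abs_of_pos ht.1]
              ring
      linarith [hb ▸ hc]
  have hfin := hmono (Set.left_mem_Icc.2 zero_le_one) (Set.right_mem_Icc.2 zero_le_one)
    zero_le_one
  simp only [ψ, one_smul, zero_smul, add_zero, one_pow, one_mul, mul_one, zero_pow,
    mul_zero, zero_mul, sub_zero, ne_eq, OfNat.ofNat_ne_zero, not_false_eq_true] at hfin
  linarith


theorem stmt_5 {n : ℕ} (g : E n → ℝ) (hgc : ConvexOn ℝ Set.univ g)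
    (hg1 : ContDiff ℝ 1 g) (g' : E n → E n) (hg' : ∀ x, HasGradientAt g (g' x) x)
    (L : ℝ) (hLip : ∀ a b, ‖g' a - g' b‖ ≤ L * ‖a - b‖)
    (γ : ℝ) (hγ : 0 < γ)
    (f : E n → ℝ) (hf : ∀ z, f z = g z + γ * ∑ i, |z i|)
    (x v w : E n) (hw : IsMinNormSubgrad f x w)
    (h1 : ∀ i, 0 < x i → 0 ≤ x i + v i)
    (h2 : ∀ i, x i < 0 → x i + v i ≤ 0)
    (h3 : ∀ i, x i = 0 → w i = 0 → v i = 0)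
    (h4 : ∀ i, x i = 0 → w i < 0 → 0 ≤ v i)
    (h5 : ∀ i, x i = 0 → 0 < w i → v i ≤ 0) :
    f (x + v) ≤ f x + (inner ℝ w v : ℝ) + L / 2 * ‖v‖ ^ 2 := by
  -- step 1: the basic coordinatewise inequality from the subgradient property
  have star : ∀ (i : Fin n) (t : ℝ),
      (w i - g' x i) * t ≤ γ * (|x i + t| - |x i|) + L / 2 * t ^ 2 := by
    intro i t
    have hz := hw.1 (x + EuclideanSpace.single i t)
    have hinner : (inner ℝ w ((x + EuclideanSpace.single i t) - x) : ℝ) = w i * t := by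
      rw [add_sub_cancel_left, rin]
      simp [EuclideanSpace.single_apply, mul_ite, Finset.sum_ite_eq']
    have hsum : ∑ j, |(x + EuclideanSpace.single i t) j|
        = (|x i + t| - |x i|) + ∑ j, |x j| := by
      have key : ∀ j, |(x + EuclideanSpace.single i t) j|
          = |x j| + (if j = i then |x i + t| - |x i| else 0) := by
        intro j
        by_cases h : j = i
        · subst h; simp [EuclideanSpace.single_apply]
        · simp [EuclideanSpace.single_apply, h]
      rw [Finset.sum_congr rfl (fun j _ => key j), Finset.sum_add_distrib]
      simp [Finset.sum_ite_eq']
      ring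
    have hdes := descent g g' hg' L hLip x (EuclideanSpace.single i t)
    have hi2 : (inner ℝ (g' x) (EuclideanSpace.single i t) : ℝ) = g' x i * t := by
      rw [rin]
      simp [EuclideanSpace.single_apply, mul_ite, Finset.sum_ite_eq']
    have hn : ‖EuclideanSpace.single i t‖ ^ 2 = t ^ 2 := by
      rw [EuclideanSpace.norm_single]; exact sq_abs t
    rw [hf, hf] at hz
    rw [hinner, hsum, mul_add] at hz
    rw [hi2, hn] at hdes
    nlinarith [hz, hdes]
  -- characterization of w on nonzero coordinates and bounds on zero coordinates
  have hpos : ∀ i, 0 < x i → w i - g' x i = γ := by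
    intro i hxi
    have ub : w i - g' x i - γ ≤ 0 := by
      apply aux_nonpos (M := L / 2) hxi
      intro t ht0 htδ
      have hst := star i t
      have ha1 : |x i + t| = x i + t := abs_of_pos (by linarith)
      have ha2 : |x i| = x i := abs_of_pos hxi
      rw [ha1, ha2] at hst
      nlinarith [hst]
    have lb : γ - (w i - g' x i) ≤ 0 := by
      apply aux_nonpos (M := L / 2) hxi
      intro t ht0 htδ
      have hst := star i (-t)
      have ha1 : |x i + -t| = x i - t := by rw [abs_of_pos (by linarith)]; ring
      have ha2 : |x i| = x i := abs_of_pos hxi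
      rw [ha1, ha2] at hst
      nlinarith [hst]
    linarith
  have hneg : ∀ i, x i < 0 → w i - g' x i = -γ := by
    intro i hxi
    have hδ : 0 < -x i := by linarith
    have ub : (w i - g' x i) + γ ≤ 0 := by
      apply aux_nonpos (M := L / 2) hδ
      intro t ht0 htδ
      have hst := star i t
      have ha1 : |x i + t| = -(x i + t) := abs_of_neg (by linarith)
      have ha2 : |x i| = -x i := abs_of_neg hxi
      rw [ha1, ha2] at hst
      nlinarith [hst]
    have lb : -((w i - g' x i) + γ) ≤ 0 := by
      apply aux_nonpos (M := L / 2) hδ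
      intro t ht0 htδ
      have hst := star i (-t)
      have ha1 : |x i + -t| = -(x i + -t) := abs_of_neg (by linarith)
      have ha2 : |x i| = -x i := abs_of_neg hxi
      rw [ha1, ha2] at hst
      nlinarith [hst]
    linarith
  have hz_ub : ∀ i, x i = 0 → w i - g' x i ≤ γ := by
    intro i hx0
    have key : w i - g' x i - γ ≤ 0 := by
      apply aux_nonpos (M := L / 2) one_pos
      intro t ht0 ht1
      have hst := star i t
      rw [hx0, zero_add, abs_of_pos ht0, abs_zero] at hst
      nlinarith [hst]
    linarith
  have hz_lb : ∀ i, x i = 0 → -γ ≤ w i - g' x i := by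
    intro i hx0
    have key : -(w i - g' x i) - γ ≤ 0 := by
      apply aux_nonpos (M := L / 2) one_pos
      intro t ht0 ht1
      have hst := star i (-t)
      rw [hx0, zero_add, abs_neg, abs_of_pos ht0, abs_zero] at hst
      nlinarith [hst]
    linarith
  have habs : ∀ j, |w j - g' x j| ≤ γ := by
    intro j
    rcases lt_trichotomy (x j) 0 with h | h | h
    · rw [hneg j h, abs_neg, abs_of_pos hγ]
    · exact abs_le.2 ⟨hz_lb j h, hz_ub j h⟩
    · rw [hpos j h, abs_of_pos hγ]
  have hprod : ∀ j, (w j - g' x j) * x j = γ * |x j| := by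
    intro j
    rcases lt_trichotomy (x j) 0 with h | h | h
    · rw [hneg j h, abs_of_neg h]; ring
    · simp [h]
    · rw [hpos j h, abs_of_pos h]
  -- sufficient condition for membership in the subdifferential
  have msub : ∀ y : E n, (∀ j, |y j - g' x j| ≤ γ) → (∀ j, (y j - g' x j) * x j = γ * |x j|) →
      y ∈ subdiff f x := by
    intro y hy1 hy2 z
    have hfoc := foc g hgc g' hg' x z
    have e1 : (inner ℝ y (z - x) : ℝ)
        = (inner ℝ (g' x) (z - x) : ℝ) + ∑ j, (y j - g' x j) * (z j - x j) := by
      rw [rin, rin, ← Finset.sum_add_distrib]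
      refine Finset.sum_congr rfl fun j _ => ?_
      have hzx : (z - x) j = z j - x j := rfl
      rw [hzx]; ring
    have e2 : ∑ j, (y j - g' x j) * (z j - x j) ≤ ∑ j, (γ * |z j| - γ * |x j|) :=
      Finset.sum_le_sum fun j _ => coord_ineq (hy1 j) (hy2 j)
    have e3 : ∑ j, (γ * |z j| - γ * |x j|) = γ * ∑ j, |z j| - γ * ∑ j, |x j| := by
      rw [Finset.sum_sub_distrib, Finset.mul_sum, Finset.mul_sum]
    rw [e3] at e2
    show f z ≥ f x + (inner ℝ y (z - x) : ℝ)
    rw [hf, hf, e1]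
    linarith
  -- step 2: using minimality on the zero coordinates
  have hz_neg : ∀ i, x i = 0 → w i < 0 → w i - g' x i = γ := by
    intro i hx0 hwi
    set b : ℝ := min (g' x i + γ) 0 with hbdef
    set y : E n := w + EuclideanSpace.single i (b - w i) with hydef
    have hyj : ∀ j, y j = if j = i then b else w j := by
      intro j
      by_cases h : j = i
      · subst h; simp [y, EuclideanSpace.single_apply]
      · simp [y, EuclideanSpace.single_apply, h]
    have hwla : g' x i - γ ≤ w i := by
      have := abs_le.1 (habs i); linarith [this.1]
    have hwi_le_a : w i ≤ g' x i + γ := by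
      have := abs_le.1 (habs i); linarith [this.2]
    have hb_lb : w i ≤ b := le_min hwi_le_a hwi.le
    have hb_ub : b ≤ 0 := min_le_right _ _
    have hmem : y ∈ subdiff f x := by
      apply msub
      · intro j
        rw [hyj j]
        by_cases h : j = i
        · rw [h, if_pos rfl]
          refine abs_le.2 ⟨?_, ?_⟩
          · have : g' x i - γ ≤ b := le_min (by linarith) (by linarith)
            linarith
          · have : b ≤ g' x i + γ := min_le_left _ _
            linarith
        · simp only [h, if_false]; exact habs j
      · intro j
        rw [hyj j]
        by_cases h : j = i
        · rw [h, if_pos rfl, hx0]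
          simp
        · simp only [h, if_false]; exact hprod j
    have hnorm := hw.2 y hmem
    have hsq : ∑ j, w j * w j ≤ ∑ j, y j * y j := by
      have hp : ‖w‖ ^ 2 ≤ ‖y‖ ^ 2 := pow_le_pow_left₀ (norm_nonneg w) hnorm 2
      rwa [← real_inner_self_eq_norm_sq, ← real_inner_self_eq_norm_sq, rin, rin] at hp
    have hdiff : ∑ j, (y j * y j - w j * w j) = b * b - w i * w i := by
      refine Finset.sum_eq_single_of_mem i (Finset.mem_univ i) ?_ |>.trans ?_
      · intro j _ hj; rw [hyj j]; simp [hj]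
      · rw [hyj i]; simp
    have hs2 : ∑ j, (y j * y j - w j * w j)
        = ∑ j, y j * y j - ∑ j, w j * w j := Finset.sum_sub_distrib _ _
    have hw2b2 : w i * w i ≤ b * b := by
      have h0 : 0 ≤ b * b - w i * w i := by rw [← hdiff, hs2]; linarith
      linarith
    have hb_eq : b = w i := by
      have hle : b ≤ w i := by nlinarith
      exact le_antisymm hle hb_lb
    rcases min_cases (g' x i + γ) 0 with ⟨hm, _⟩ | ⟨hm, _⟩
    · rw [hbdef] at hb_eq; rw [hm] at hb_eq; linarith
    · exfalso; rw [hbdef] at hb_eq; rw [hm] at hb_eq; linarith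
  have hz_pos : ∀ i, x i = 0 → 0 < w i → w i - g' x i = -γ := by
    intro i hx0 hwi
    set b : ℝ := max (g' x i - γ) 0 with hbdef
    set y : E n := w + EuclideanSpace.single i (b - w i) with hydef
    have hyj : ∀ j, y j = if j = i then b else w j := by
      intro j
      by_cases h : j = i
      · subst h; simp [y, EuclideanSpace.single_apply]
      · simp [y, EuclideanSpace.single_apply, h]
    have hwla : g' x i - γ ≤ w i := by
      have := abs_le.1 (habs i); linarith [this.1]
    have hwi_le_a : w i ≤ g' x i + γ := by
      have := abs_le.1 (habs i); linarith [this.2]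
    have hb_ub : b ≤ w i := max_le hwla hwi.le
    have hb_lb : 0 ≤ b := le_max_right _ _
    have hmem : y ∈ subdiff f x := by
      apply msub
      · intro j
        rw [hyj j]
        by_cases h : j = i
        · rw [h, if_pos rfl]
          refine abs_le.2 ⟨?_, ?_⟩
          · have : g' x i - γ ≤ b := le_max_left _ _
            linarith
          · have : b ≤ g' x i + γ := max_le (by linarith) (by linarith)
            linarith
        · simp only [h, if_false]; exact habs j
      · intro j
        rw [hyj j]
        by_cases h : j = i
        · rw [h, if_pos rfl, hx0]
          simp
        · simp only [h, if_false]; exact hprod j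
    have hnorm := hw.2 y hmem
    have hsq : ∑ j, w j * w j ≤ ∑ j, y j * y j := by
      have hp : ‖w‖ ^ 2 ≤ ‖y‖ ^ 2 := pow_le_pow_left₀ (norm_nonneg w) hnorm 2
      rwa [← real_inner_self_eq_norm_sq, ← real_inner_self_eq_norm_sq, rin, rin] at hp
    have hdiff : ∑ j, (y j * y j - w j * w j) = b * b - w i * w i := by
      refine Finset.sum_eq_single_of_mem i (Finset.mem_univ i) ?_ |>.trans ?_
      · intro j _ hj; rw [hyj j]; simp [hj]
      · rw [hyj i]; simp
    have hs2 : ∑ j, (y j * y j - w j * w j)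
        = ∑ j, y j * y j - ∑ j, w j * w j := Finset.sum_sub_distrib _ _
    have hw2b2 : w i * w i ≤ b * b := by
      have h0 : 0 ≤ b * b - w i * w i := by rw [← hdiff, hs2]; linarith
      linarith
    have hb_eq : b = w i := by
      have hle : w i ≤ b := by nlinarith
      exact le_antisymm hb_ub hle
    rcases max_cases (g' x i - γ) 0 with ⟨hm, _⟩ | ⟨hm, _⟩
    · rw [hbdef] at hb_eq; rw [hm] at hb_eq; linarith
    · exfalso; rw [hbdef] at hb_eq; rw [hm] at hb_eq; linarith
  -- step 3: the coordinatewise inequality for v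
  have key : ∀ i, γ * (|x i + v i| - |x i|) ≤ (w i - g' x i) * v i := by
    intro i
    rcases lt_trichotomy (x i) 0 with h | h | h
    · rw [hneg i h, abs_of_nonpos (h2 i h), abs_of_neg h]
      have : γ * (-(x i + v i) - -x i) = -γ * v i := by ring
      rw [this]
    · rw [h, zero_add, abs_zero, sub_zero]
      rcases lt_trichotomy (w i) 0 with hwi | hwi | hwi
      · rw [hz_neg i h hwi, abs_of_nonneg (h4 i h hwi)]
      · rw [h3 i h hwi]; simp
      · rw [hz_pos i h hwi, abs_of_nonpos (h5 i h hwi)]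
        have : γ * -v i = -γ * v i := by ring
        rw [this]
    · rw [hpos i h, abs_of_nonneg (h1 i h), abs_of_pos h]
      have : γ * (x i + v i - x i) = γ * v i := by ring
      rw [this]
  -- assemble everything
  have hdes := descent g g' hg' L hLip x v
  have hsumkey := Finset.sum_le_sum fun j (_ : j ∈ Finset.univ) => key j
  have hL : ∑ j, γ * (|x j + v j| - |x j|)
      = γ * ∑ j, |x j + v j| - γ * ∑ j, |x j| := by
    rw [← Finset.mul_sum, Finset.sum_sub_distrib, mul_sub]
  rw [hL] at hsumkey
  have hwv : (inner ℝ w v : ℝ)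
      = (inner ℝ (g' x) v : ℝ) + ∑ j, (w j - g' x j) * v j := by
    rw [rin, rin, ← Finset.sum_add_distrib]
    refine Finset.sum_congr rfl fun j _ => ?_
    ring
  have hxvj : ∑ j, |(x + v) j| = ∑ j, |x j + v j| := by
    refine Finset.sum_congr rfl fun j _ => ?_
    rfl
  rw [hf, hf, hxvj]
  linarith

end
end

section
/- Let f(x) = g(x) + γ|x|₁ with g : ℝⁿ → ℝ C¹, μ-strongly convex, and ∇g L-Lipschitz (L > μ > 0), γ > 0. Fix x ∈ ℝⁿ, set h = 1/L and xᵗᵉᵐᵖ = x − h∂⁻f(x). If sign(xᵢᵗᵉᵐᵖ · xᵢ) ≥ 0 for all i = 1,…,n, then f(xᵗᵉᵐᵖ) − f(x*) ≤ (1 − μ/L)(f(x) − f(x*)), where x* is the unique minimizer of f. -/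
open scoped RealInnerProductSpace BigOperators
open scoped Classical

noncomputable section

open Filter Topology Set

/-! ### Auxiliary lemmas -/

lemma aux_sign_nonneg {r : ℝ} (h : 0 ≤ Real.sign r) : 0 ≤ r := by
  rcases lt_trichotomy r 0 with h1 | h1 | h1
  · rw [Real.sign_of_neg h1] at h; linarith
  · exact h1.ge
  · exact h1.le

lemma aux_slope_tendsto {n : ℕ} (g : E n → ℝ) (x gx : E n) (hx : HasGradientAt g gx x)
    (d : E n) :
    Filter.Tendsto (fun t : ℝ => (g (x + t • d) - g x) / t) (𝓝[>] (0:ℝ))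
      (𝓝 (inner ℝ gx d : ℝ)) := by
  have hφ : HasDerivAt (fun t : ℝ => x + t • d) d 0 := by
    simpa using ((hasDerivAt_id (0:ℝ)).smul_const d).const_add x
  have h1 : HasDerivAt (fun t : ℝ => g (x + t • d)) (inner ℝ gx d : ℝ) 0 := by
    have hx' : HasFDerivAt g ((InnerProductSpace.toDual ℝ (E n)) gx) (x + (0:ℝ) • d) := by
      simpa using hasGradientAt_iff_hasFDerivAt.mp hx
    have := hx'.comp_hasDerivAt 0 hφ
    exact this
  have h2 := hasDerivAt_iff_tendsto_slope.mp h1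
  have h3 : Tendsto (slope (fun t : ℝ => g (x + t • d)) 0) (𝓝[>] (0:ℝ))
      (𝓝 (inner ℝ gx d : ℝ)) :=
    h2.mono_left (nhdsWithin_mono _ (fun t ht => ne_of_gt ht))
  refine h3.congr (fun t => ?_)
  simp [slope_def_field, div_eq_inv_mul]

lemma aux_norm_combo {n : ℕ} (x z : E n) (t : ℝ) :
    ‖x + t • (z - x)‖^2 = (1-t)*‖x‖^2 + t*‖z‖^2 - t*(1-t)*‖z-x‖^2 := by
  have h1 : ‖x + t • (z - x)‖^2 = ‖x‖^2 + 2 * (t * ⟪x, z - x⟫) + t^2 * ‖z - x‖^2 := by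
    rw [norm_add_sq_real, real_inner_smul_right, norm_smul]
    simp [Real.norm_eq_abs, mul_pow, sq_abs]
  have h2 : ‖z‖^2 = ‖x‖^2 + 2 * ⟪x, z - x⟫ + ‖z - x‖^2 := by
    have : z = x + (z - x) := by abel
    nth_rewrite 1 [this]
    rw [norm_add_sq_real]
  rw [h1]; linear_combination -t * h2

lemma aux_strong_combo {n : ℕ} (μ : ℝ) (g : E n → ℝ) (hsc : StronglyConvex μ g) (x z : E n)
    (t : ℝ) (ht0 : 0 ≤ t) (ht1 : t ≤ 1) :
    g (x + t • (z - x)) ≤ (1-t) * g x + t * g z - μ/2 * (t*(1-t)*‖z-x‖^2) := by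
  have hxz : (1-t) • x + t • z = x + t • (z - x) := by
    rw [sub_smul, smul_sub]; module
  have h := hsc.2 (Set.mem_univ x) (Set.mem_univ z) (by linarith : (0:ℝ) ≤ 1 - t) ht0 (by ring)
  rw [hxz] at h
  simp only [smul_eq_mul] at h
  rw [aux_norm_combo x z t] at h
  ring_nf at h ⊢
  linarith [h]

lemma aux_l1_convex {n : ℕ} (x z : E n) (t : ℝ) (ht0 : 0 ≤ t) (ht1 : t ≤ 1) :
    ∑ i, |(x + t • (z - x)) i| ≤ (1-t) * ∑ i, |x i| + t * ∑ i, |z i| := by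
  rw [Finset.mul_sum, Finset.mul_sum, ← Finset.sum_add_distrib]
  refine Finset.sum_le_sum (fun i _ => ?_)
  have happ : (x + t • (z - x)) i = (1-t) * x i + t * z i := by
    simp [PiLp.add_apply, PiLp.smul_apply, PiLp.sub_apply, smul_eq_mul]; ring
  rw [happ]
  calc |(1-t) * x i + t * z i| ≤ |(1-t) * x i| + |t * z i| := abs_add_le _ _
    _ = (1-t) * |x i| + t * |z i| := by
        rw [abs_mul, abs_mul, abs_of_nonneg (by linarith : (0:ℝ) ≤ 1-t), abs_of_nonneg ht0]

lemma aux_descent {n : ℕ} (L : ℝ) (g : E n → ℝ) (g' : E n → E n)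
    (hg' : ∀ z, HasGradientAt g (g' z) z) (hLip : ∀ a b, ‖g' a - g' b‖ ≤ L * ‖a - b‖)
    (x y : E n) : g y ≤ g x + ⟪g' x, y - x⟫ + L/2 * ‖y - x‖^2 := by
  set d := y - x with hd
  set ψ : ℝ → ℝ := fun t => g (x + t • d) - t * ⟪g' x, d⟫ - L * t^2 / 2 * ‖d‖^2 with hψ
  have hder : ∀ t : ℝ, HasDerivAt ψ (⟪g' (x + t • d), d⟫ - ⟪g' x, d⟫ - L * t * ‖d‖^2) t := by
    intro t
    have hφ : HasDerivAt (fun t : ℝ => x + t • d) d t := by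
      simpa using ((hasDerivAt_id t).smul_const d).const_add x
    have hx' : HasFDerivAt g ((InnerProductSpace.toDual ℝ (E n)) (g' (x + t • d))) (x + t • d) :=
      hasGradientAt_iff_hasFDerivAt.mp (hg' _)
    have h1 : HasDerivAt (fun t : ℝ => g (x + t • d)) ⟪g' (x + t • d), d⟫ t := by
      have := hx'.comp_hasDerivAt t hφ
      exact this
    have h2 : HasDerivAt (fun t : ℝ => t * ⟪g' x, d⟫) ⟪g' x, d⟫ t := by
      simpa using (hasDerivAt_id t).mul_const (⟪g' x, d⟫ : ℝ)
    have h3 : HasDerivAt (fun t : ℝ => L * t^2 / 2 * ‖d‖^2) (L * t * ‖d‖^2) t := by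
      have h4 : HasDerivAt (fun t : ℝ => t^2) (2 * t) t := by
        simpa using hasDerivAt_pow 2 t
      have := ((h4.const_mul L).div_const 2).mul_const (‖d‖^2)
      exact this.congr_deriv (by ring)
    exact (h1.sub h2).sub h3
  have hdiff : Differentiable ℝ ψ := fun t => (hder t).differentiableAt
  have hanti : AntitoneOn ψ (Icc (0:ℝ) 1) := by
    apply antitoneOn_of_deriv_nonpos (convex_Icc 0 1) (hdiff.continuous.continuousOn)
      (hdiff.differentiableOn)
    intro t ht
    rw [interior_Icc] at ht
    rw [(hder t).deriv]
    have h4 : ⟪g' (x + t • d) - g' x, d⟫ ≤ ‖g' (x + t • d) - g' x‖ * ‖d‖ :=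
      real_inner_le_norm _ _
    have h5 : ‖g' (x + t • d) - g' x‖ ≤ L * ‖t • d‖ := by
      have := hLip (x + t • d) x
      simpa using this
    have h6 : ‖t • d‖ = t * ‖d‖ := by
      rw [norm_smul, Real.norm_eq_abs, abs_of_nonneg ht.1.le]
    rw [inner_sub_left] at h4
    rw [h6] at h5
    nlinarith [mul_le_mul_of_nonneg_right h5 (norm_nonneg d)]
  have key := hanti (left_mem_Icc.mpr zero_le_one) (right_mem_Icc.mpr zero_le_one) zero_le_one
  have hψ0 : ψ 0 = g x := by simp [hψ]
  have hψ1 : ψ 1 = g y - ⟪g' x, d⟫ - L / 2 * ‖d‖^2 := by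
    have hxy : x + (1:ℝ) • d = y := by rw [one_smul, hd]; abel
    simp only [hψ]
    rw [hxy]; ring
  rw [hψ0, hψ1] at key
  linarith

lemma aux_gconv {n : ℕ} (g : E n → ℝ) (μ : ℝ) (hμ : 0 < μ) (hsc : StronglyConvex μ g)
    (g' : E n → E n) (hg' : ∀ z, HasGradientAt g (g' z) z) (x : E n) :
    ∀ z, g x + ⟪g' x, z - x⟫ ≤ g z := by
  intro z
  have hμ2 : 0 ≤ μ/2 := by linarith
  have key : ∀ t : ℝ, t ∈ Ioc (0:ℝ) 1 → (g (x + t • (z - x)) - g x) / t ≤ g z - g x := by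
    intro t ht
    have h1 := aux_strong_combo μ g hsc x z t ht.1.le ht.2
    rw [div_le_iff₀ ht.1]
    nlinarith [mul_nonneg hμ2 (mul_nonneg (mul_nonneg ht.1.le
      (by linarith [ht.2] : (0:ℝ) ≤ 1 - t)) (sq_nonneg ‖z-x‖))]
  have hlim := aux_slope_tendsto g x (g' x) (hg' x) (z - x)
  have hev : ∀ᶠ t in 𝓝[>] (0:ℝ), (g (x + t • (z - x)) - g x) / t ≤ g z - g x :=
    Filter.Eventually.mono (Ioc_mem_nhdsGT_of_mem ⟨le_refl 0, zero_lt_one⟩) key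
  have := le_of_tendsto hlim hev
  linarith

lemma aux_stepA {n : ℕ} (g : E n → ℝ) (γ : ℝ) (hγ : 0 < γ)
    (g' : E n → E n) (hg' : ∀ z, HasGradientAt g (g' z) z)
    (f : E n → ℝ) (hf : ∀ z, f z = g z + γ * ∑ i, |z i|) (x v : E n)
    (hsub : v ∈ subdiff f x) :
    ∀ d : E n, (⟪v - g' x, d⟫:ℝ) ≤ γ * ((∑ i, |(x + d) i|) - ∑ i, |x i|) := by
  intro d
  set ℓ : E n → ℝ := fun z => ∑ i, |z i| with hℓ
  have key : ∀ t : ℝ, t ∈ Ioc (0:ℝ) 1 →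
      (⟪v, d⟫:ℝ) - γ * (ℓ (x + d) - ℓ x) ≤ (g (x + t • d) - g x) / t := by
    intro t ht
    have h1 := hsub (x + t • d)
    rw [hf, hf] at h1
    have h2 : (⟪v, (x + t • d) - x⟫:ℝ) = t * ⟪v, d⟫ := by
      rw [add_sub_cancel_left, real_inner_smul_right]
    rw [h2] at h1
    have h3 : ℓ (x + t • d) ≤ (1-t) * ℓ x + t * ℓ (x + d) := by
      have := aux_l1_convex x (x + d) t ht.1.le ht.2
      simpa [hℓ] using this
    have h4 := mul_le_mul_of_nonneg_left h3 hγ.le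
    rw [le_div_iff₀ ht.1]
    nlinarith [h1, h4]
  have hlim := aux_slope_tendsto g x (g' x) (hg' x) d
  have hev := Filter.Eventually.mono (Ioc_mem_nhdsGT_of_mem ⟨le_refl 0, zero_lt_one⟩) key
  have hge := ge_of_tendsto hlim hev
  rw [inner_sub_left]
  linarith

lemma aux_l1_single {n : ℕ} (x : E n) (i : Fin n) (t : ℝ) :
    ∑ j, |(x + EuclideanSpace.single i t) j| = (∑ j, |x j|) + (|x i + t| - |x i|) := by
  have h : ∀ j, |(x + EuclideanSpace.single i t) j|
      = |x j| + (if j = i then |x i + t| - |x i| else 0) := by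
    intro j
    by_cases hj : j = i
    · subst hj; simp [EuclideanSpace.single_apply]
    · simp [hj, EuclideanSpace.single_apply]
  simp only [h, Finset.sum_add_distrib, Finset.sum_ite_eq' Finset.univ, Finset.mem_univ, if_true]

set_option maxHeartbeats 1000000 in
theorem stmt_8 {n : ℕ} (g : E n → ℝ) (hg1 : ContDiff ℝ 1 g)
    (μ L γ : ℝ) (hμ : 0 < μ) (hμL : μ < L) (hγ : 0 < γ)
    (hsc : StronglyConvex μ g)
    (g' : E n → E n) (hg' : ∀ z, HasGradientAt g (g' z) z)
    (hLip : ∀ a b, ‖g' a - g' b‖ ≤ L * ‖a - b‖)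
    (f : E n → ℝ) (hf : ∀ z, f z = g z + γ * ∑ i, |z i|)
    (x xstar v : E n) (hv : IsMinNormSubgrad f x v)
    (hmin : ∀ z, f xstar ≤ f z)
    (hsign : ∀ i, 0 ≤ Real.sign ((x i - (1 / L) * v i) * x i)) :
    f (x - (1 / L) • v) - f xstar ≤ (1 - μ / L) * (f x - f xstar) := by
  have hL : 0 < L := hμ.trans hμL
  set s : E n := v - g' x with hs
  have hA := aux_stepA g γ hγ g' hg' f hf x v hv.1
  -- coordinatewise inequality
  have hB1 : ∀ (i : Fin n) (t : ℝ), s i * t ≤ γ * (|x i + t| - |x i|) := by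
    intro i t
    have h1 := hA (EuclideanSpace.single i t)
    rw [aux_l1_single x i t] at h1
    have h2 : (⟪s, EuclideanSpace.single i t⟫ : ℝ) = s i * t := by
      simp [EuclideanSpace.inner_single_right, mul_comm]
    rw [hs] at h2
    rw [h2] at h1
    simpa [hs] using h1
  have habs : ∀ i : Fin n, |s i| ≤ γ := by
    intro i
    have h1 := hB1 i 1
    have h2 := hB1 i (-1)
    have h3 : |x i + 1| ≤ |x i| + 1 := by
      calc |x i + 1| ≤ |x i| + |(1:ℝ)| := abs_add_le _ _
        _ = |x i| + 1 := by norm_num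
    have h4 : |x i + (-1)| ≤ |x i| + 1 := by
      calc |x i + (-1)| ≤ |x i| + |(-1:ℝ)| := abs_add_le _ _
        _ = |x i| + 1 := by norm_num
    rw [abs_le]
    constructor <;> nlinarith
  have hsx : ∀ i : Fin n, s i * x i = γ * |x i| := by
    intro i
    have h1 := hB1 i (-x i)
    simp only [add_neg_cancel, abs_zero] at h1
    have h2 : s i * x i ≤ γ * |x i| := by
      calc s i * x i ≤ |s i * x i| := le_abs_self _
        _ = |s i| * |x i| := abs_mul _ _
        _ ≤ γ * |x i| := by
            exact mul_le_mul_of_nonneg_right (habs i) (abs_nonneg _)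
    nlinarith [h1]
  -- converse : modified subgradients stay in the subdifferential
  have hgconv := aux_gconv g μ hμ hsc g' hg' x
  have hC : ∀ s' : E n, (∀ i, |s' i| ≤ γ) → (∀ i, s' i * x i = γ * |x i|) →
      (g' x + s') ∈ subdiff f x := by
    intro s' h1 h2 z
    rw [hf z, hf x]
    have h3 : (⟪g' x + s', z - x⟫ : ℝ) = ⟪g' x, z - x⟫ + ⟪s', z - x⟫ := inner_add_left _ _ _
    have h4 : (⟪s', z - x⟫ : ℝ) = ∑ i, s' i * (z - x) i := by
      simp [PiLp.inner_apply, RCLike.inner_apply, mul_comm]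
    have h5 : (⟪s', z - x⟫ : ℝ) ≤ γ * ∑ i, |z i| - γ * ∑ i, |x i| := by
      rw [h4]
      calc ∑ i, s' i * (z - x) i = ∑ i, (s' i * z i - γ * |x i|) := by
            refine Finset.sum_congr rfl fun i _ => ?_
            have hzx : (z - x) i = z i - x i := rfl
            rw [hzx, mul_sub, h2 i]
        _ ≤ ∑ i, (γ * |z i| - γ * |x i|) := by
            refine Finset.sum_le_sum fun i _ => ?_
            have hb : s' i * z i ≤ γ * |z i| := by
              calc s' i * z i ≤ |s' i * z i| := le_abs_self _
                _ = |s' i| * |z i| := abs_mul _ _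
                _ ≤ γ * |z i| := mul_le_mul_of_nonneg_right (h1 i) (abs_nonneg _)
            linarith
        _ = γ * ∑ i, |z i| - γ * ∑ i, |x i| := by
            rw [Finset.sum_sub_distrib, Finset.mul_sum, Finset.mul_sum]
    have h6 := hgconv z
    rw [ge_iff_le, h3]
    linarith
  -- key coordinate identity at the new point
  have hD : ∀ i : Fin n, s i * (x i - (1/L) * v i) = γ * |x i - (1/L) * v i| := by
    intro i
    have hxvi : 0 ≤ (x i - (1/L) * v i) * x i := aux_sign_nonneg (hsign i)
    have hub := (abs_le.mp (habs i)).2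
    have hlb := (abs_le.mp (habs i)).1
    by_cases hxi : x i = 0
    · by_cases hvi : v i = 0
      · rw [hxi, hvi]; simp
      · -- minimality argument
        have hmin2 : ∀ c : ℝ, |c| ≤ γ → (v i)^2 ≤ (v i - s i + c)^2 := by
          intro c hc
          set u : E n := WithLp.toLp 2 (Function.update s.ofLp i c) with hu
          have hu1 : ∀ j, |u j| ≤ γ := by
            intro j
            by_cases hj : j = i
            · subst hj; rw [hu]; simp only [PiLp.toLp_apply, Function.update_self]; exact hc
            · rw [hu]; simp only [PiLp.toLp_apply, Function.update_of_ne hj]; exact habs j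
          have hu2 : ∀ j, u j * x j = γ * |x j| := by
            intro j
            by_cases hj : j = i
            · subst hj; rw [hxi]; simp
            · rw [hu]; simp only [PiLp.toLp_apply, Function.update_of_ne hj]; exact hsx j
          have hy := hC u hu1 hu2
          have hnle := hv.2 _ hy
          have hq : (⟪v, v⟫:ℝ) ≤ ⟪g' x + u, g' x + u⟫ := by
            rw [real_inner_self_eq_norm_sq, real_inner_self_eq_norm_sq]
            exact pow_le_pow_left₀ (norm_nonneg v) hnle 2
          have hq2 : ∑ j, v j * v j ≤ ∑ j, (g' x + u) j * (g' x + u) j := by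
            simp only [PiLp.inner_apply, RCLike.inner_apply, conj_trivial] at hq
            simpa [PiLp.inner_apply, RCLike.inner_apply, mul_comm] using hq
          have heq : ∀ j ∈ Finset.univ.erase i, v j * v j = (g' x + u) j * (g' x + u) j := by
            intro j hj
            have hj' : j ≠ i := Finset.ne_of_mem_erase hj
            have h5 : (g' x + u) j = v j := by
              have h6 : (g' x + u) j = g' x j + u j := rfl
              rw [h6, hu]
              simp only [PiLp.toLp_apply, Function.update_of_ne hj']
              rw [hs]
              have h7 : (v - g' x) j = v j - g' x j := rfl
              rw [h7]; ring
            rw [h5]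
          have hsplit1 := Finset.add_sum_erase Finset.univ (fun j => v j * v j)
            (Finset.mem_univ i)
          have hsplit2 := Finset.add_sum_erase Finset.univ
            (fun j => (g' x + u) j * (g' x + u) j) (Finset.mem_univ i)
          have hsum_eq := Finset.sum_congr rfl heq
          have hvi2 : v i * v i ≤ (g' x + u) i * (g' x + u) i := by
            rw [← hsplit1, ← hsplit2, ← hsum_eq] at hq2
            beta_reduce at hq2
            linarith [hq2]
          have hgu : (g' x + u) i = v i - s i + c := by
            have h5 : (g' x + u) i = g' x i + u i := rfl
            rw [h5, hu]
            simp only [PiLp.toLp_apply, Function.update_self]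
            have h6 : g' x i = v i - s i := by
              rw [hs]
              have h7 : (v - g' x) i = v i - g' x i := rfl
              rw [h7]; ring
            rw [h6]
          rw [hgu] at hvi2
          rw [pow_two, pow_two]
          exact hvi2
        rcases lt_or_gt_of_ne hvi with hneg | hpos
        · -- v i < 0 : show s i = γ
          have hsi : s i = γ := by
            by_contra hne
            have hslt : s i < γ := lt_of_le_of_ne hub hne
            rcases le_or_gt (s i - v i) γ with h7 | h7
            · have hc : |s i - v i| ≤ γ := abs_le.mpr ⟨by linarith, h7⟩
              have h8 := hmin2 (s i - v i) hc
              nlinarith [h8, hneg]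
            · have hc : |γ| ≤ γ := by rw [abs_of_pos hγ]
              have h8 := hmin2 γ hc
              nlinarith [h8, hneg, hslt, h7]
          rw [hxi, hsi]
          have h8 : (0:ℝ) ≤ 0 - 1/L * v i := by
            have h9 : 0 < 1/L := by positivity
            nlinarith [hneg]
          rw [abs_of_nonneg h8]
        · -- v i > 0 : show s i = -γ
          have hsi : s i = -γ := by
            by_contra hne
            have hslt : -γ < s i := lt_of_le_of_ne hlb (Ne.symm hne)
            rcases le_or_gt (-γ) (s i - v i) with h7 | h7
            · have hc : |s i - v i| ≤ γ := abs_le.mpr ⟨h7, by linarith⟩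
              have h8 := hmin2 (s i - v i) hc
              nlinarith [h8, hpos]
            · have hc : |(-γ)| ≤ γ := by rw [abs_neg, abs_of_pos hγ]
              have h8 := hmin2 (-γ) hc
              nlinarith [h8, hpos, hslt, h7]
          rw [hxi, hsi]
          have h8 : (0:ℝ) - 1/L * v i ≤ 0 := by
            have h9 : 0 < 1/L := by positivity
            nlinarith [hpos]
          rw [abs_of_nonpos h8]; ring
    · -- x i ≠ 0
      have h1 := hsx i
      rcases lt_or_gt_of_ne hxi with hneg | hpos
      · have hu : x i - (1/L) * v i ≤ 0 := by nlinarith [hxvi]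
        have hsi : s i = -γ := by
          have habsx : |x i| = -x i := abs_of_neg hneg
          rw [habsx] at h1
          exact mul_right_cancel₀ hxi (by linarith [h1])
        rw [hsi, abs_of_nonpos hu]; ring
      · have hu : 0 ≤ x i - (1/L) * v i := by nlinarith [hxvi]
        have hsi : s i = γ := by
          have habsx : |x i| = x i := abs_of_pos hpos
          rw [habsx] at h1
          exact mul_right_cancel₀ hxi (by linarith [h1])
        rw [hsi, abs_of_nonneg hu]
  -- descent step
  have hE : f (x - (1/L) • v) ≤ f x - ‖v‖^2 / (2*L) := by
    have hdesc := aux_descent L g g' hg' hLip x (x - (1/L) • v)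
    have hw : (x - (1/L) • v) - x = -((1/L) • v) := by abel
    rw [hw] at hdesc
    have hnorm : ‖-((1/L) • v)‖^2 = (1/L)^2 * ‖v‖^2 := by
      rw [norm_neg, norm_smul, Real.norm_eq_abs, mul_pow, sq_abs]
    have hin1 : (⟪g' x, -((1/L) • v)⟫:ℝ) = -((1/L) * ⟪g' x, v⟫) := by
      rw [inner_neg_right, real_inner_smul_right]
    rw [hnorm, hin1] at hdesc
    have happly : ∀ i : Fin n, (x - (1/L) • v) i = x i - (1/L) * v i := fun i => rfl
    have hsum : γ * ∑ i, |(x - (1/L) • v) i| = γ * (∑ i, |x i|) - (1/L) * ∑ i, s i * v i := by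
      have h1 : ∀ i : Fin n, γ * |(x - (1/L) • v) i| = s i * x i - (1/L) * (s i * v i) := by
        intro i
        rw [happly i, ← hD i]
        ring
      calc γ * ∑ i, |(x - (1/L) • v) i| = ∑ i, γ * |(x - (1/L) • v) i| := Finset.mul_sum _ _ _
        _ = ∑ i, (s i * x i - (1/L) * (s i * v i)) := Finset.sum_congr rfl fun i _ => h1 i
        _ = (∑ i, s i * x i) - (1/L) * ∑ i, s i * v i := by
            rw [Finset.sum_sub_distrib, Finset.mul_sum]
        _ = γ * (∑ i, |x i|) - (1/L) * ∑ i, s i * v i := by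
            congr 1
            rw [Finset.mul_sum]
            exact Finset.sum_congr rfl fun i _ => hsx i
    have hsv : ∑ i, s i * v i = ‖v‖^2 - ⟪g' x, v⟫ := by
      have h2 : (⟪s, v⟫:ℝ) = ∑ i, s i * v i := by
        simp [PiLp.inner_apply, RCLike.inner_apply, mul_comm]
      have h3 : (⟪s, v⟫:ℝ) = ⟪v, v⟫ - ⟪g' x, v⟫ := by
        rw [hs, inner_sub_left]
      rw [← h2, h3, real_inner_self_eq_norm_sq]
    have heq : L/2 * ((1/L)^2 * ‖v‖^2) - (1/L) * ‖v‖^2 = -(‖v‖^2/(2*L)) := by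
      field_simp
      ring
    rw [hf (x - (1/L) • v), hf x]
    rw [hsum, hsv]
    nlinarith [hdesc, heq]
  -- PL inequality
  have hF : f x - f xstar ≤ ‖v‖^2 / (2*μ) := by
    have hcombo : ∀ t : ℝ, t ∈ Ioc (0:ℝ) 1 → f (x + t • (xstar - x)) ≤
        (1-t) * f x + t * f xstar - μ/2 * (t*(1-t)*‖xstar-x‖^2) := by
      intro t ht
      rw [hf, hf, hf]
      have h1 := aux_strong_combo μ g hsc x xstar t ht.1.le ht.2
      have h2 := aux_l1_convex x xstar t ht.1.le ht.2
      have h3 := mul_le_mul_of_nonneg_left h2 hγ.le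
      nlinarith [h1, h3]
    have hkey : (⟪v, xstar - x⟫:ℝ) + μ/2 * ‖xstar-x‖^2 ≤ f xstar - f x := by
      refine le_of_forall_pos_le_add ?_
      intro ε hε
      set D := ‖xstar - x‖^2 with hDdef
      have hD0 : 0 ≤ D := sq_nonneg _
      have hden : 0 < μ/2 * D + 1 := by positivity
      set t := min 1 (ε / (μ/2 * D + 1)) with htdef
      have ht0 : 0 < t := lt_min one_pos (div_pos hε hden)
      have ht1 : t ≤ 1 := min_le_left _ _
      have hc := hcombo t ⟨ht0, ht1⟩
      have hsub2 := hv.1 (x + t • (xstar - x))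
      have hinner : (⟪v, (x + t • (xstar - x)) - x⟫:ℝ) = t * ⟪v, xstar - x⟫ := by
        rw [add_sub_cancel_left, real_inner_smul_right]
      rw [ge_iff_le, hinner] at hsub2
      have hstep : t * ⟪v, xstar - x⟫ + μ/2 * (t*(1-t)*D) ≤ t * (f xstar - f x) := by
        nlinarith [hc, hsub2]
      have h10 : t * ((⟪v, xstar - x⟫:ℝ) + μ/2 * ((1-t)*D)) ≤ t * (f xstar - f x) := by
        nlinarith [hstep]
      have h11 := le_of_mul_le_mul_left h10 ht0
      have htineq : μ/2 * t * D ≤ ε := by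
        have hmin3 : t ≤ ε / (μ/2*D + 1) := min_le_right _ _
        have h12 : t * (μ/2*D) ≤ (ε/(μ/2*D+1)) * (μ/2*D) :=
          mul_le_mul_of_nonneg_right hmin3 (by positivity)
        have h13 : (ε/(μ/2*D+1)) * (μ/2*D) ≤ ε := by
          rw [div_mul_eq_mul_div, div_le_iff₀ hden]
          have := mul_le_mul_of_nonneg_left (show μ/2*D ≤ μ/2*D+1 by linarith) hε.le
          linarith
        calc μ/2 * t * D = t * (μ/2*D) := by ring
          _ ≤ (ε/(μ/2*D+1)) * (μ/2*D) := h12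
          _ ≤ ε := h13
      have hexp : μ/2 * ((1-t)*D) = μ/2 * D - μ/2 * t * D := by ring
      rw [hexp] at h11
      linarith [h11, htineq]
    have hcs : -(‖v‖ * ‖xstar - x‖) ≤ (⟪v, xstar - x⟫:ℝ) := by
      have := abs_real_inner_le_norm v (xstar - x)
      have := neg_abs_le (⟪v, xstar - x⟫:ℝ)
      linarith
    rw [le_div_iff₀ (by positivity : (0:ℝ) < 2*μ)]
    nlinarith [hkey, hcs, sq_nonneg (μ * ‖xstar - x‖ - ‖v‖), hμ, norm_nonneg v,
      norm_nonneg (xstar - x)]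
  have h0 : 0 ≤ f x - f xstar := sub_nonneg.mpr (hmin x)
  have h9 : 2*μ*(f x - f xstar) ≤ ‖v‖^2 := by
    have := (le_div_iff₀ (by positivity : (0:ℝ) < 2*μ)).mp hF
    linarith
  have h7 : μ / L * (f x - f xstar) ≤ ‖v‖^2 / (2*L) := by
    rw [div_mul_eq_mul_div, div_le_div_iff₀ hL (by positivity : (0:ℝ) < 2*L)]
    nlinarith [mul_le_mul_of_nonneg_right h9 hL.le]
  have h8 : (1 - μ/L) * (f x - f xstar) = (f x - f xstar) - μ/L * (f x - f xstar) := by ring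
  linarith [hE, h7]
end
end

section
/- Let f(x) = g(x) + γ|x|₁ with g C¹, μ-strongly convex, ∇g L-Lipschitz, γ > 0, and step-size h = 1/L. Let x ∈ ℝⁿ and suppose some component strictly changes sign in xᵗᵉᵐᵖ = x − h∂⁻f(x), i.e. there exists i with xᵢ·xᵢᵗᵉᵐᵖ < 0. Define x' by x'ᵢ = xᵢ if sign(xᵢᵗᵉᵐᵖ·xᵢ) > 0 and x'ᵢ = 0 otherwise, and x'' = x' + v'' where v''ᵢ = −h∂ᵢ⁻f(x) if sign(xᵢᵗᵉᵐᵖ·xᵢ) > 0 and v''ᵢ = −h∂ᵢ⁻f(x') otherwise. Then min(f(x'), f(x'')) − f(x*) ≤ (1 + μ/L)⁻¹ (f(x) − f(x*)). -/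
open scoped RealInnerProductSpace BigOperators
open scoped Classical

noncomputable section

section helpers
variable {n : ℕ}

lemma sign_pos_iff {t : ℝ} : 0 < Real.sign t ↔ 0 < t := by
  rcases lt_trichotomy t 0 with h | h | h
  · rw [Real.sign_of_neg h]; constructor <;> intro h2 <;> linarith
  · simp [h, Real.sign_zero]
  · simp [Real.sign_of_pos h, h]

lemma sgn_mul_self {t : ℝ} (h : t ≠ 0) : Real.sign t * t = |t| := by
  rcases h.lt_or_gt with h1 | h1
  · rw [Real.sign_of_neg h1, abs_of_neg h1]; ring
  · rw [Real.sign_of_pos h1, abs_of_pos h1]; ring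

lemma inner_sum' (a b : E n) : ⟪a, b⟫ = ∑ i, a i * b i := by
  simp [PiLp.inner_apply, RCLike.inner_apply, conj_trivial, mul_comm]

lemma normsq_sum' (a : E n) : ‖a‖^2 = ∑ i, (a i)^2 := by
  rw [← real_inner_self_eq_norm_sq]
  rw [PiLp.inner_apply]; simp [RCLike.inner_apply, conj_trivial, sq]

lemma hasDerivAt_line (gg : E n → ℝ) (gr : E n → E n) (hg : ∀ z, HasGradientAt gg (gr z) z)
    (a d : E n) (t0 : ℝ) :
    HasDerivAt (fun t : ℝ => gg (a + t • d)) ⟪gr (a + t0 • d), d⟫ t0 := by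
  have h1 : HasDerivAt (fun t : ℝ => a + t • d) d t0 := by
    simpa using (hasDerivAt_id t0).smul_const d |>.const_add a
  have h2 := (hg (a + t0 • d)).hasFDerivAt.comp_hasDerivAt t0 h1
  simp [InnerProductSpace.toDual_apply_apply] at h2
  exact h2


lemma norm_line_sq (a d : E n) (t : ℝ) :
    ‖a + t • d‖^2 = ‖a‖^2 + 2*t*⟪a, d⟫ + t^2*‖d‖^2 := by
  rw [norm_add_sq_real, real_inner_smul_right, norm_smul]
  simp [Real.norm_eq_abs, mul_pow, sq_abs]; ring

lemma grad_lower {μ : ℝ} {gg : E n → ℝ} {gr : E n → E n}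
    (hg : ∀ z, HasGradientAt gg (gr z) z) (hsc : StronglyConvex μ gg) (a z : E n) :
    gg a + ⟪gr a, z - a⟫ + μ/2 * ‖z - a‖^2 ≤ gg z := by
  set d := z - a with hd
  set ψ : ℝ → ℝ := fun t => gg (a + t • d) - μ/2 * (‖a‖^2 + 2*t*⟪a, d⟫ + t^2*‖d‖^2) with hψ
  have hconv : ConvexOn ℝ Set.univ ψ := by
    have := hsc.comp_affineMap (AffineMap.lineMap a z : ℝ →ᵃ[ℝ] E n)
    have heq : ψ = (fun x => gg x - μ / 2 * ‖x‖ ^ 2) ∘ (AffineMap.lineMap a z : ℝ →ᵃ[ℝ] E n) := by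
      funext t
      simp only [Function.comp_apply, hψ]
      rw [AffineMap.lineMap_apply_module]
      rw [show (1-t) • a + t • z = a + t • d by rw [hd, sub_smul, one_smul, smul_sub]; abel]
      rw [norm_line_sq]
    rw [heq]
    simpa using this
  have hder : HasDerivAt ψ (⟪gr a, d⟫ - μ * ⟪a, d⟫) 0 := by
    have h1 : HasDerivAt (fun t : ℝ => gg (a + t • d)) ⟪gr a, d⟫ 0 := by
      have := hasDerivAt_line gg gr hg a d 0
      simpa using this
    have h2 : HasDerivAt (fun t : ℝ => μ/2 * (‖a‖^2 + 2*t*⟪a, d⟫ + t^2*‖d‖^2))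
        (μ * ⟪a, d⟫) 0 := by
      have hb : HasDerivAt (fun t : ℝ => ‖a‖^2 + 2*t*⟪a, d⟫ + t^2*‖d‖^2)
          (2*⟪a, d⟫ + 2*0*‖d‖^2) 0 := by
        have hb1 : HasDerivAt (fun t : ℝ => 2*t*⟪a, d⟫) (2*⟪a, d⟫) 0 := by
          simpa [mul_comm, mul_assoc] using
            (hasDerivAt_id (0:ℝ)).const_mul 2 |>.mul_const ⟪a, d⟫
        have hb2 : HasDerivAt (fun t : ℝ => t^2*‖d‖^2) (2*0*‖d‖^2) 0 := by
          simpa using (hasDerivAt_pow 2 (0:ℝ)).mul_const (‖d‖^2)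
        exact (hb1.const_add (‖a‖^2)).add hb2
      have h2' := hb.const_mul (μ/2)
      exact h2'.congr_deriv (by ring)
    exact h1.sub h2
  have hslope : ⟪gr a, d⟫ - μ * ⟪a, d⟫ ≤ slope ψ 0 1 :=
    hconv.le_slope_of_hasDerivWithinAt_Ioi (Set.mem_univ 0) (Set.mem_univ 1)
      one_pos hder.hasDerivWithinAt
  rw [slope_def_field] at hslope
  have hψ1 : ψ 1 = gg z - μ/2 * (‖a‖^2 + 2*⟪a, d⟫ + ‖d‖^2) := by
    simp only [hψ, one_smul, one_pow, mul_one]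
    rw [show a + d = z by rw [hd]; abel]
    ring_nf
  have hψ0 : ψ 0 = gg a - μ/2 * ‖a‖^2 := by simp [hψ]
  rw [hψ1, hψ0] at hslope
  have := hslope
  simp only [sub_zero, div_one] at this
  nlinarith [this]

lemma descent_s9 {Lc : ℝ} (hL : 0 < Lc) {gg : E n → ℝ} {gr : E n → E n}
    (hg : ∀ z, HasGradientAt gg (gr z) z)
    (hLip : ∀ a b, ‖gr a - gr b‖ ≤ Lc * ‖a - b‖) (a b : E n) :
    gg b ≤ gg a + ⟪gr a, b - a⟫ + Lc/2 * ‖b - a‖^2 := by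
  set d := b - a with hd
  set χ : ℝ → ℝ := fun t => gg (a + t • d) - t*⟪gr a, d⟫ - t^2*(Lc/2*‖d‖^2) with hχ
  have hder : ∀ t : ℝ, HasDerivAt χ
      (⟪gr (a + t • d), d⟫ - ⟪gr a, d⟫ - 2*t*(Lc/2*‖d‖^2)) t := by
    intro t
    have h1 := hasDerivAt_line gg gr hg a d t
    have h2 : HasDerivAt (fun s : ℝ => s*⟪gr a, d⟫) ⟪gr a, d⟫ t := by
      simpa using (hasDerivAt_id t).mul_const ⟪gr a, d⟫
    have h3 : HasDerivAt (fun s : ℝ => s^2*(Lc/2*‖d‖^2)) (2*t*(Lc/2*‖d‖^2)) t := by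
      have := (hasDerivAt_pow 2 t).mul_const (Lc/2*‖d‖^2)
      exact this.congr_deriv (by norm_num)
    exact (h1.sub h2).sub h3
  have hdiff : Differentiable ℝ χ := fun t => (hder t).differentiableAt
  have hanti : AntitoneOn χ (Set.Icc 0 1) := by
    apply antitoneOn_of_deriv_nonpos (convex_Icc 0 1) hdiff.continuous.continuousOn
      hdiff.differentiableOn
    intro t ht
    rw [interior_Icc] at ht
    rw [(hder t).deriv]
    have hip : ⟪gr (a + t • d), d⟫ - ⟪gr a, d⟫ = ⟪gr (a + t • d) - gr a, d⟫ := by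
      rw [inner_sub_left]
    rw [hip]
    have hcs : ⟪gr (a + t • d) - gr a, d⟫ ≤ ‖gr (a + t • d) - gr a‖ * ‖d‖ :=
      real_inner_le_norm _ _
    have hlip2 : ‖gr (a + t • d) - gr a‖ ≤ Lc * (t * ‖d‖) := by
      have := hLip (a + t • d) a
      simpa [norm_smul, abs_of_pos ht.1] using this
    nlinarith [norm_nonneg d, ht.1.le, mul_le_mul_of_nonneg_right hlip2 (norm_nonneg d)]
  have := hanti (Set.left_mem_Icc.2 zero_le_one) (Set.right_mem_Icc.2 zero_le_one) zero_le_one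
  have hχ1 : χ 1 = gg b - ⟪gr a, d⟫ - Lc/2*‖d‖^2 := by
    simp [hχ, show a + d = b by rw [hd]; abel]
  have hχ0 : χ 0 = gg a := by simp [hχ]
  rw [hχ1, hχ0] at this
  linarith

lemma l1_line (a : E n) (i : Fin n) (t : ℝ) :
    ∑ j, |(a + t • EuclideanSpace.single i (1:ℝ)) j| = (∑ j, |a j|) + (|a i + t| - |a i|) := by
  have hcoord : ∀ j, |(a + t • EuclideanSpace.single i (1:ℝ)) j|
      = |a j| + (if j = i then |a i + t| - |a i| else 0) := by
    intro j
    by_cases hji : j = i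
    · subst hji; simp [EuclideanSpace.single_apply]
    · simp [EuclideanSpace.single_apply, hji]
  rw [Finset.sum_congr rfl (fun j _ => hcoord j), Finset.sum_add_distrib,
    Finset.sum_ite_eq' Finset.univ i (fun _ => |a i + t| - |a i|)]
  simp

lemma subgrad_line {γ : ℝ} {gg : E n → ℝ} {f : E n → ℝ}
    (hf : ∀ z, f z = gg z + γ * ∑ i, |z i|) {w u : E n} (hu : u ∈ subdiff f w)
    (i : Fin n) (t : ℝ) :
    gg w + γ * |w i| - γ * |w i + t| + t * u i ≤ gg (w + t • EuclideanSpace.single i (1:ℝ)) := by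
  have h := hu (w + t • EuclideanSpace.single i (1:ℝ))
  rw [hf, hf] at h
  rw [l1_line] at h
  have hip : (inner ℝ u ((w + t • EuclideanSpace.single i (1:ℝ)) - w) : ℝ) = t * u i := by
    rw [show (w + t • EuclideanSpace.single i (1:ℝ)) - w = t • EuclideanSpace.single i (1:ℝ) by abel]
    rw [real_inner_smul_right, inner_sum']
    rw [Finset.sum_eq_single i (fun j _ hji => by simp [EuclideanSpace.single_apply, hji]) (by simp)]
    simp
  rw [hip, mul_add, mul_sub] at h
  linarith

lemma subdiff_coord_ne {γ : ℝ} {gg : E n → ℝ} {gr : E n → E n} {f : E n → ℝ}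
    (hg : ∀ z, HasGradientAt gg (gr z) z)
    (hf : ∀ z, f z = gg z + γ * ∑ i, |z i|) {w u : E n} (hu : u ∈ subdiff f w)
    {i : Fin n} (hwi : w i ≠ 0) : u i = gr w i + γ * Real.sign (w i) := by
  set η : ℝ → ℝ := fun t => gg (w + t • EuclideanSpace.single i (1:ℝ)) + γ * |w i + t| - t * u i
    with hη
  have hmin : IsLocalMin η 0 := by
    apply Filter.Eventually.of_forall
    intro t
    have := subgrad_line hf hu i t
    simp only [hη]
    simp only [zero_smul, add_zero, zero_mul, sub_zero, mul_zero]
    nlinarith [this]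
  have habs : HasDerivAt (fun t : ℝ => |w i + t|) (Real.sign (w i)) 0 := by
    have h1 : HasDerivAt (fun t : ℝ => w i + t) 1 0 := by
      simpa using (hasDerivAt_id (0:ℝ)).const_add (w i)
    have h2 : HasDerivAt (fun y : ℝ => |y|) (Real.sign (w i)) (w i + 0) := by
      rw [add_zero]
      have := hasDerivAt_abs hwi
      rcases hwi.lt_or_gt with h1 | h1 <;>
        simp [Real.sign_of_neg, Real.sign_of_pos, h1] at this ⊢ <;> convert this using 1 <;>
        simp [h1]
    exact (h2.comp 0 h1).congr_deriv (mul_one _)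
  have hglin : HasDerivAt (fun t : ℝ => gg (w + t • EuclideanSpace.single i (1:ℝ))) (gr w i) 0 := by
    have := hasDerivAt_line gg gr hg w (EuclideanSpace.single i (1:ℝ)) 0
    have hipr : ⟪gr w, EuclideanSpace.single i (1:ℝ)⟫ = gr w i := by
      rw [inner_sum', Finset.sum_eq_single i
        (fun j _ hji => by simp [EuclideanSpace.single_apply, hji]) (by simp)]
      simp
    simpa [hipr] using this
  have hdη : HasDerivAt η (gr w i + γ * Real.sign (w i) - u i) 0 := by
    have h3 : HasDerivAt (fun t : ℝ => t * u i) (u i) 0 := by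
      simpa using (hasDerivAt_id (0:ℝ)).mul_const (u i)
    exact (hglin.add (habs.const_mul γ)).sub h3
  have := hmin.hasDerivAt_eq_zero hdη
  linarith

lemma subdiff_coord_zero {γ : ℝ} {gg : E n → ℝ} {gr : E n → E n} {f : E n → ℝ}
    (hg : ∀ z, HasGradientAt gg (gr z) z)
    (hf : ∀ z, f z = gg z + γ * ∑ i, |z i|) {w u : E n} (hu : u ∈ subdiff f w)
    {i : Fin n} (hwi : w i = 0) : |u i - gr w i| ≤ γ := by
  set q : ℝ → ℝ := fun t => gg (w + t • EuclideanSpace.single i (1:ℝ)) with hq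
  have hdq : HasDerivAt q (gr w i) 0 := by
    have := hasDerivAt_line gg gr hg w (EuclideanSpace.single i (1:ℝ)) 0
    have hipr : ⟪gr w, EuclideanSpace.single i (1:ℝ)⟫ = gr w i := by
      rw [inner_sum', Finset.sum_eq_single i
        (fun j _ hji => by simp [EuclideanSpace.single_apply, hji]) (by simp)]
      simp
    simpa [hipr] using this
  have hkey : ∀ t : ℝ, t * u i - γ * |t| ≤ q t - q 0 := by
    intro t
    have := subgrad_line hf hu i t
    rw [hwi] at this
    simp only [abs_zero, zero_add, mul_zero] at this
    simp only [hq]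
    simp only [zero_smul, add_zero]
    linarith
  have hslope := hasDerivAt_iff_tendsto_slope.mp hdq
  have hright : u i - γ ≤ gr w i := by
    have htends : Filter.Tendsto (slope q 0) (nhdsWithin 0 (Set.Ioi 0)) (nhds (gr w i)) :=
      hslope.mono_left (nhdsWithin_mono 0 (fun t ht => ne_of_gt ht))
    refine ge_of_tendsto htends ?_
    filter_upwards [self_mem_nhdsWithin] with t ht
    have ht0 : (0:ℝ) < t := ht
    rw [slope_def_field]
    rw [sub_zero]
    rw [le_div_iff₀ ht0]
    have := hkey t
    rw [abs_of_pos ht0] at this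
    linarith
  have hleft : gr w i ≤ u i + γ := by
    have htends : Filter.Tendsto (slope q 0) (nhdsWithin 0 (Set.Iio 0)) (nhds (gr w i)) :=
      hslope.mono_left (nhdsWithin_mono 0 (fun t ht => ne_of_lt ht))
    refine le_of_tendsto htends ?_
    filter_upwards [self_mem_nhdsWithin] with t ht
    have ht0 : t < (0:ℝ) := ht
    rw [slope_def_field, sub_zero, div_le_iff_of_neg ht0]
    have := hkey t
    rw [abs_of_neg ht0] at this
    linarith
  rw [abs_le]
  constructor <;> linarith

lemma strong_subgrad {μ γ : ℝ} (hγ : 0 ≤ γ) {gg : E n → ℝ} {gr : E n → E n} {f : E n → ℝ}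
    (hg : ∀ z, HasGradientAt gg (gr z) z) (hsc : StronglyConvex μ gg)
    (hf : ∀ z, f z = gg z + γ * ∑ i, |z i|) {w s : E n}
    (hs : ∀ i, |s i| ≤ 1 ∧ s i * w i = |w i|) (z : E n) :
    f w + ⟪gr w + γ • s, z - w⟫ + μ/2 * ‖z - w‖^2 ≤ f z := by
  have hgpart := grad_lower hg hsc w z
  have hinner : ⟪gr w + γ • s, z - w⟫ = ⟪gr w, z - w⟫ + γ * ⟪s, z - w⟫ := by
    rw [inner_add_left, real_inner_smul_left]
  have hl1 : γ * (∑ i, |w i|) + γ * ⟪s, z - w⟫ ≤ γ * ∑ i, |z i| := by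
    have hsum : (∑ i, |w i|) + ⟪s, z - w⟫ ≤ ∑ i, |z i| := by
      rw [inner_sum']
      have : ∀ i, |w i| + s i * ((z - w) i) ≤ |z i| := by
        intro i
        have h1 := (hs i).1
        have h2 := (hs i).2
        have hzi : s i * z i ≤ |z i| := by
          calc s i * z i ≤ |s i * z i| := le_abs_self _
          _ = |s i| * |z i| := abs_mul _ _
          _ ≤ 1 * |z i| := by
              exact mul_le_mul_of_nonneg_right h1 (abs_nonneg _)
          _ = |z i| := one_mul _
        have hsub : (z - w) i = z i - w i := by simp
        rw [hsub]
        nlinarith [h2]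
      calc (∑ i, |w i|) + ∑ i, s i * ((z - w) i) = ∑ i, (|w i| + s i * ((z - w) i)) := by
            rw [Finset.sum_add_distrib]
      _ ≤ ∑ i, |z i| := Finset.sum_le_sum (fun i _ => this i)
    nlinarith [hsum]
  rw [hf w, hf z, hinner]
  linarith

lemma minnorm_coord {μ γ : ℝ} (hγ : 0 < γ) (hμ : 0 ≤ μ) {gg : E n → ℝ} {gr : E n → E n}
    {f : E n → ℝ}
    (hg : ∀ z, HasGradientAt gg (gr z) z) (hsc : StronglyConvex μ gg)
    (hf : ∀ z, f z = gg z + γ * ∑ i, |z i|) {w vv : E n}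
    (hvv : IsMinNormSubgrad f w vv) {i : Fin n} (hi : w i = 0) :
    vv i = if |gr w i| ≤ γ then 0 else gr w i - γ * Real.sign (gr w i) := by
  set a : ℝ := gr w i with ha
  set p : ℝ := if |a| ≤ γ then 0 else a - γ * Real.sign a with hp
  set S : E n := WithLp.toLp 2 (fun j => if j = i then (p - a)/γ else (vv j - gr w j)/γ) with hS
  have hSapp : ∀ j, S j = if j = i then (p - a)/γ else (vv j - gr w j)/γ := fun j => rfl
  have hSadm : ∀ j, |S j| ≤ 1 ∧ S j * w j = |w j| := by
    intro j
    by_cases hji : j = i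
    · subst hji
      rw [hSapp, if_pos rfl]
      constructor
      · by_cases hag : |a| ≤ γ
        · rw [hp, if_pos hag]
          rw [abs_div, abs_of_pos hγ, div_le_one hγ]
          simpa using hag
        · rw [hp, if_neg hag]
          have hane : a ≠ 0 := by
            intro h0; rw [h0] at hag; simp at hag; linarith
          have : a - γ * Real.sign a - a = -(γ * Real.sign a) := by ring
          rw [this, abs_div, abs_of_pos hγ, div_le_one hγ, abs_neg, abs_mul,
            abs_of_pos hγ]
          rcases hane.lt_or_gt with h1 | h1 <;>
            simp [Real.sign_of_neg, Real.sign_of_pos, h1]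
      · rw [hi]; simp
    · rw [hSapp, if_neg hji]
      by_cases hwj : w j = 0
      · have := subdiff_coord_zero hg hf hvv.1 hwj
        constructor
        · rw [abs_div, abs_of_pos hγ, div_le_one hγ]; exact this
        · rw [hwj]; simp
      · have := subdiff_coord_ne hg hf hvv.1 hwj
        have hSj : (vv j - gr w j)/γ = Real.sign (w j) := by
          rw [this]; field_simp; ring
        rw [hSj]
        constructor
        · rcases lt_or_gt_of_ne hwj with h1 | h1 <;>
            simp [Real.sign_of_neg, Real.sign_of_pos, h1]
        · exact sgn_mul_self hwj
  have hy : (gr w + γ • S) ∈ subdiff f w := by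
    intro z
    have := strong_subgrad (le_of_lt hγ) hg hsc hf hSadm z
    have hnn : 0 ≤ μ/2 * ‖z - w‖^2 := by positivity
    simp only [ge_iff_le]
    linarith
  have hle := hvv.2 _ hy
  have hyj : ∀ j, j ≠ i → (gr w + γ • S) j = vv j := by
    intro j hji
    have : (gr w + γ • S) j = gr w j + γ * S j := by simp
    rw [this, hSapp, if_neg hji]
    field_simp; ring
  have hyi : (gr w + γ • S) i = p := by
    have : (gr w + γ • S) i = gr w i + γ * S i := by simp
    rw [this, hSapp, if_pos rfl]
    field_simp; ring
  have hsq : (vv i)^2 ≤ p^2 := by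
    have h1 : ‖vv‖^2 ≤ ‖gr w + γ • S‖^2 := by
      have := hle
      nlinarith [norm_nonneg vv, norm_nonneg (gr w + γ • S)]
    rw [normsq_sum', normsq_sum'] at h1
    rw [← Finset.add_sum_erase Finset.univ _ (Finset.mem_univ i),
      ← Finset.add_sum_erase Finset.univ (fun j => ((gr w + γ • S) j)^2) (Finset.mem_univ i)]
      at h1
    have heq : ∑ j ∈ Finset.univ.erase i, (vv j)^2
        = ∑ j ∈ Finset.univ.erase i, ((gr w + γ • S) j)^2 := by
      apply Finset.sum_congr rfl
      intro j hj
      rw [hyj j (Finset.ne_of_mem_erase hj)]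
    rw [hyi] at h1
    linarith [heq ▸ h1]
  have hb : |vv i - a| ≤ γ := subdiff_coord_zero hg hf hvv.1 hi
  rw [abs_le] at hb
  by_cases hag : |a| ≤ γ
  · rw [hp, if_pos hag] at hsq ⊢
    have : (vv i)^2 ≤ 0 := by nlinarith
    nlinarith [sq_nonneg (vv i)]
  · rw [hp, if_neg hag] at hsq ⊢
    rw [not_le, lt_abs] at hag
    rcases hag with h1 | h1
    · have hs1 : Real.sign a = 1 := Real.sign_of_pos (by linarith)
      rw [hs1] at hsq ⊢
      nlinarith
    · have hs1 : Real.sign a = -1 := Real.sign_of_neg (by linarith)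
      rw [hs1] at hsq ⊢
      nlinarith

lemma sgn_abs_le (t : ℝ) : |Real.sign t| ≤ 1 := by
  rcases lt_trichotomy t 0 with h | h | h
  · rw [Real.sign_of_neg h]; norm_num
  · rw [h, Real.sign_zero]; norm_num
  · rw [Real.sign_of_pos h]; norm_num

end helpers

set_option maxHeartbeats 2000000 in
theorem stmt_9 {n : ℕ} (g : E n → ℝ) (hg1 : ContDiff ℝ 1 g)
    (μ L γ : ℝ) (hμ : 0 < μ) (hμL : μ < L) (hγ : 0 < γ)
    (hsc : StronglyConvex μ g)
    (g' : E n → E n) (hg' : ∀ z, HasGradientAt g (g' z) z)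
    (hLip : ∀ a b, ‖g' a - g' b‖ ≤ L * ‖a - b‖)
    (f : E n → ℝ) (hf : ∀ z, f z = g z + γ * ∑ i, |z i|)
    (x xstar v v' x' x'' : E n)
    (hmin : ∀ z, f xstar ≤ f z)
    (hv : IsMinNormSubgrad f x v)
    (hcross : ∃ i, x i * (x i - (1 / L) * v i) < 0)
    (hx' : ∀ i, x' i = if 0 < Real.sign ((x i - (1 / L) * v i) * x i) then x i else 0)
    (hv' : IsMinNormSubgrad f x' v')
    (hx'' : ∀ i, x'' i = if 0 < Real.sign ((x i - (1 / L) * v i) * x i)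
        then x' i - (1 / L) * v i else x' i - (1 / L) * v' i) :
    min (f x') (f x'') - f xstar ≤ (1 + μ / L)⁻¹ * (f x - f xstar) := by
  classical
  have hL : 0 < L := lt_trans hμ hμL
  have hLne : L ≠ 0 := ne_of_gt hL
  have hcL : L * (1/L) = 1 := by field_simp
  have hPiff : ∀ i, (0 < Real.sign ((x i - (1 / L) * v i) * x i))
      ↔ 0 < (x i - (1 / L) * v i) * x i := fun i => sign_pos_iff
  have hx'P : ∀ i, 0 < Real.sign ((x i - (1 / L) * v i) * x i) → x' i = x i :=
    fun i hi => by rw [hx' i, if_pos hi]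
  have hx'N : ∀ i, ¬ (0 < Real.sign ((x i - (1 / L) * v i) * x i)) → x' i = 0 :=
    fun i hi => by rw [hx' i, if_neg hi]
  have hPx0 : ∀ i, 0 < Real.sign ((x i - (1 / L) * v i) * x i) → x i ≠ 0 := by
    intro i hi h0
    rw [hPiff i, h0] at hi
    simp at hi
  have hvi : ∀ i, x i ≠ 0 → v i = g' x i + γ * Real.sign (x i) :=
    fun i hi => subdiff_coord_ne hg' hf hv.1 hi
  have hv'P : ∀ i, 0 < Real.sign ((x i - (1 / L) * v i) * x i) →
      v' i = g' x' i + γ * Real.sign (x i) := by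
    intro i hi
    have := subdiff_coord_ne hg' hf hv'.1 (by rw [hx'P i hi]; exact hPx0 i hi)
    rw [this, hx'P i hi]
  have hv'N : ∀ i, ¬ (0 < Real.sign ((x i - (1 / L) * v i) * x i)) →
      v' i = (if |g' x' i| ≤ γ then 0 else g' x' i - γ * Real.sign (g' x' i)) :=
    fun i hi => minnorm_coord hγ (le_of_lt hμ) hg' hsc hf hv' (hx'N i hi)
  -- the vectors s, u, w
  set s : E n := WithLp.toLp 2 (fun i => if 0 < Real.sign ((x i - (1 / L) * v i) * x i)
      then Real.sign (x i) else (v' i - g' x' i)/γ) with hs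
  have hsapp : ∀ i, s i = if 0 < Real.sign ((x i - (1 / L) * v i) * x i)
      then Real.sign (x i) else (v' i - g' x' i)/γ := fun i => rfl
  set u : E n := g' x' + γ • s with hu
  have huapp : ∀ i, u i = g' x' i + γ * s i := by intro i; rw [hu]; simp
  set w : E n := WithLp.toLp 2 (fun i => if 0 < Real.sign ((x i - (1 / L) * v i) * x i)
      then v i else v' i) with hw
  have hwapp : ∀ i, w i = if 0 < Real.sign ((x i - (1 / L) * v i) * x i)
      then v i else v' i := fun i => rfl
  -- admissibility of s at x'
  have hsadm : ∀ i, |s i| ≤ 1 ∧ s i * x' i = |x' i| := by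
    intro i
    by_cases hPi : 0 < Real.sign ((x i - (1 / L) * v i) * x i)
    · rw [hsapp i, if_pos hPi, hx'P i hPi]
      exact ⟨sgn_abs_le _, sgn_mul_self (hPx0 i hPi)⟩
    · rw [hsapp i, if_neg hPi, hx'N i hPi]
      constructor
      · have := subdiff_coord_zero hg' hf hv'.1 (hx'N i hPi)
        rw [abs_div, abs_of_pos hγ, div_le_one hγ]
        exact this
      · simp
  -- u is a strong subgradient at x'
  have hstrong : ∀ z, f x' + ⟪u, z - x'⟫ + μ/2 * ‖z - x'‖^2 ≤ f z :=
    fun z => strong_subgrad (le_of_lt hγ) hg' hsc hf hsadm z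
  -- x'' = x' - (1/L) • w
  have hx''eq : x'' = x' - (1/L) • w := by
    ext i
    rw [hx'' i]
    have hrhs : (x' - (1/L) • w) i = x' i - (1/L) * (w i) := rfl
    rw [hrhs, hwapp i]
    by_cases hPi : 0 < Real.sign ((x i - (1 / L) * v i) * x i)
    · rw [if_pos hPi, if_pos hPi]
    · rw [if_neg hPi, if_neg hPi]
  -- deviation δ = w - u
  have hδ : ∀ i, w i - u i = if 0 < Real.sign ((x i - (1 / L) * v i) * x i)
      then g' x i - g' x' i else 0 := by
    intro i
    by_cases hPi : 0 < Real.sign ((x i - (1 / L) * v i) * x i)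
    · rw [if_pos hPi, huapp i, hsapp i, if_pos hPi, hwapp i, if_pos hPi,
        hvi i (hPx0 i hPi)]
      ring
    · rw [if_neg hPi, huapp i, hsapp i, if_neg hPi, hwapp i, if_neg hPi]
      field_simp; ring
  have hδnorm : ‖w - u‖ ≤ L * ‖x - x'‖ := by
    refine le_trans ?_ (hLip x x')
    have h1 : ‖w - u‖^2 ≤ ‖g' x - g' x'‖^2 := by
      rw [normsq_sum', normsq_sum']
      apply Finset.sum_le_sum
      intro i _
      have he : (w - u) i = w i - u i := rfl
      have he2 : (g' x - g' x') i = g' x i - g' x' i := rfl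
      rw [he, he2, hδ i]
      by_cases hPi : 0 < Real.sign ((x i - (1 / L) * v i) * x i)
      · rw [if_pos hPi]
      · rw [if_neg hPi]
        simpa using sq_nonneg (g' x i - g' x' i)
    nlinarith [norm_nonneg (w - u), norm_nonneg (g' x - g' x')]
  -- Step 1 : f x' + L/2 ‖x - x'‖² ≤ f x
  have hstep1 : f x' + L/2 * ‖x - x'‖^2 ≤ f x := by
    have hdes := descent_s9 hL hg' hLip x x'
    have hcoord : ∀ i, g' x i * (x' i - x i) + γ * |x' i| + (L/2) * (x' i - x i)^2
        ≤ γ * |x i| - (L/2) * (x i - x' i)^2 := by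
      intro i
      by_cases hPi : 0 < Real.sign ((x i - (1 / L) * v i) * x i)
      · rw [hx'P i hPi]
        ring_nf
        simp
      · rw [hx'N i hPi]
        by_cases hxi : x i = 0
        · rw [hxi]; simp
        · have h2 : (x i - (1/L) * v i) * x i ≤ 0 := by
            by_contra h3
            exact hPi ((hPiff i).2 (lt_of_not_ge h3))
          have h2' : x i ^ 2 ≤ 1/L * (v i * x i) := by nlinarith [h2]
          have hvx : L * (x i)^2 ≤ v i * x i := by
            calc L * (x i)^2 ≤ L * (1/L * (v i * x i)) :=
                  mul_le_mul_of_nonneg_left h2' hL.le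
            _ = (L * (1/L)) * (v i * x i) := by ring
            _ = v i * x i := by rw [hcL]; ring
          have hgi : g' x i * x i = v i * x i - γ * |x i| := by
            rw [hvi i hxi]
            have hsg := sgn_mul_self hxi
            linear_combination (-γ) * hsg
          simp only [abs_zero, zero_sub, sub_zero, mul_zero, mul_neg]
          nlinarith [hgi, hvx]
    have hsum := Finset.sum_le_sum (fun i (_ : i ∈ Finset.univ) => hcoord i)
    rw [Finset.sum_sub_distrib] at hsum
    simp only [Finset.sum_add_distrib, ← Finset.mul_sum] at hsum
    have hip : ⟪g' x, x' - x⟫ = ∑ i, g' x i * (x' i - x i) := by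
      rw [inner_sum']
      exact Finset.sum_congr rfl (fun i _ => rfl)
    have hn1 : ‖x' - x‖^2 = ∑ i, (x' i - x i)^2 := by
      rw [normsq_sum']
      exact Finset.sum_congr rfl (fun i _ => rfl)
    have hn2 : ‖x - x'‖^2 = ∑ i, (x i - x' i)^2 := by
      rw [normsq_sum']
      exact Finset.sum_congr rfl (fun i _ => rfl)
    rw [hf x', hf x]
    rw [hip, hn1] at hdes
    rw [hn2]
    linarith [hdes, hsum]
  -- per-coordinate ℓ1 identity at x''
  have habs2 : ∀ i, |x'' i| = s i * x'' i := by
    intro i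
    by_cases hPi : 0 < Real.sign ((x i - (1 / L) * v i) * x i)
    · have hsi : s i = Real.sign (x i) := by rw [hsapp i, if_pos hPi]
      have hx''i : x'' i = x i - (1/L) * v i := by rw [hx'' i, if_pos hPi, hx'P i hPi]
      have hprod : 0 < (x i - 1/L * v i) * x i := (hPiff i).1 hPi
      rw [hsi, hx''i]
      rcases lt_or_gt_of_ne (hPx0 i hPi) with h1 | h1
      · have hneg : x i - 1/L * v i < 0 := by nlinarith
        rw [Real.sign_of_neg h1, abs_of_neg hneg]; ring
      · have hpos : 0 < x i - 1/L * v i := by nlinarith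
        rw [Real.sign_of_pos h1, abs_of_pos hpos]; ring
    · have hsi : s i = (v' i - g' x' i)/γ := by rw [hsapp i, if_neg hPi]
      have hx''i : x'' i = -((1/L) * v' i) := by rw [hx'' i, if_neg hPi, hx'N i hPi]; ring
      have hvv := hv'N i hPi
      rw [hsi, hx''i]
      by_cases hag : |g' x' i| ≤ γ
      · rw [hvv, if_pos hag]; simp
      · rw [hvv, if_neg hag]
        rw [not_le, lt_abs] at hag
        rcases hag with h1 | h1
        · have hs1 : Real.sign (g' x' i) = 1 := Real.sign_of_pos (by linarith)
          rw [hs1]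
          have hLinv : (0:ℝ) < 1/L := by positivity
          have hneg : -((1/L) * (g' x' i - γ * 1)) < 0 := by nlinarith
          rw [abs_of_neg hneg]
          field_simp; ring
        · have hs1 : Real.sign (g' x' i) = -1 := Real.sign_of_neg (by linarith)
          rw [hs1]
          have hLinv : (0:ℝ) < 1/L := by positivity
          have hpos : 0 < -((1/L) * (g' x' i - γ * (-1))) := by nlinarith
          rw [abs_of_pos hpos]
          field_simp; ring
  have hl1'' : ∑ j, |x'' j| = ⟪s, x''⟫ := by
    rw [inner_sum']
    exact Finset.sum_congr rfl (fun j _ => habs2 j)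
  have hl1' : ⟪s, x'⟫ = ∑ j, |x' j| := by
    rw [inner_sum']
    exact Finset.sum_congr rfl (fun j _ => (hsadm j).2)
  have hd : x'' - x' = -((1/L) • w) := by rw [hx''eq]; abel
  have eq_a : ⟪s, x''⟫ = (∑ j, |x' j|) - (1/L) * ⟪s, w⟫ := by
    have : (⟪s, x''⟫ : ℝ) = ⟪s, x'⟫ + ⟪s, x'' - x'⟫ := by
      rw [← inner_add_right]
      norm_num
    rw [this, hd, inner_neg_right, real_inner_smul_right, hl1']
    ring
  have eq_b : ⟪g' x', x'' - x'⟫ = -((1/L) * ⟪g' x', w⟫) := by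
    rw [hd, inner_neg_right, real_inner_smul_right]
  have eq_c : ‖x'' - x'‖^2 = (1/L)^2 * ‖w‖^2 := by
    rw [hd, norm_neg, norm_smul, Real.norm_eq_abs, abs_of_pos (by positivity : (0:ℝ) < 1/L),
      mul_pow]
  have eq_d : ⟪u, w⟫ = ⟪g' x', w⟫ + γ * ⟪s, w⟫ := by
    rw [hu, inner_add_left, real_inner_smul_left]
  have eq_e : ‖w‖^2 = ‖u‖^2 + 2*⟪u, w - u⟫ + ‖w - u‖^2 := by
    have := norm_add_sq_real u (w - u)
    rw [show u + (w - u) = w from by abel] at this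
    exact this
  have eq_f : ⟪u, w⟫ = ‖u‖^2 + ⟪u, w - u⟫ := by
    have : (⟪u, w⟫ : ℝ) = ⟪u, u⟫ + ⟪u, w - u⟫ := by
      rw [← inner_add_right, show u + (w - u) = w from by abel]
    rw [this, real_inner_self_eq_norm_sq]
  have hG : ⟪g' x', w⟫ = ‖u‖^2 + ⟪u, w - u⟫ - γ * ⟪s, w⟫ := by linarith [eq_d, eq_f]
  -- Step 2
  have hstep2 : f x'' ≤ f x - 1/(2*L) * ‖u‖^2 := by
    have hdes := descent_s9 hL hg' hLip x' x''
    have key2 : f x'' ≤ f x' - 1/(2*L) * ‖u‖^2 + 1/(2*L) * ‖w - u‖^2 := by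
      have h0 : f x'' = g x'' + γ * ⟪s, x''⟫ := by rw [hf x'', hl1'']
      rw [h0, hf x']
      rw [eq_b, eq_c] at hdes
      rw [eq_a]
      have hcomb : -((1/L) * ⟪g' x', w⟫) + L/2 * ((1/L)^2 * ‖w‖^2)
          + γ * (-( (1/L) * ⟪s, w⟫)) = -(1/(2*L) * ‖u‖^2) + 1/(2*L) * ‖w - u‖^2 := by
        rw [hG, eq_e]
        field_simp
        ring
      nlinarith [hdes, hcomb]
    have hδsq : ‖w - u‖^2 ≤ L^2 * ‖x - x'‖^2 := by
      nlinarith [hδnorm, norm_nonneg (w - u), mul_nonneg hL.le (norm_nonneg (x - x'))]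
    have hDD : 1/(2*L) * ‖w - u‖^2 ≤ L/2 * ‖x - x'‖^2 := by
      calc 1/(2*L) * ‖w - u‖^2 ≤ 1/(2*L) * (L^2 * ‖x - x'‖^2) :=
            mul_le_mul_of_nonneg_left hδsq (by positivity)
      _ = L/2 * ‖x - x'‖^2 := by field_simp
    linarith [key2, hstep1, hDD]
  -- Step 3 : strong convexity lower bound
  have hstep3 : 2*μ*(f x' - f xstar) ≤ ‖u‖^2 := by
    have h := hstrong xstar
    have hsq : (0:ℝ) ≤ ‖u + μ • (xstar - x')‖^2 := sq_nonneg _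
    rw [norm_add_sq_real, real_inner_smul_right, norm_smul, Real.norm_eq_abs,
      abs_of_pos hμ, mul_pow] at hsq
    nlinarith [mul_le_mul_of_nonneg_left h (by positivity : (0:ℝ) ≤ 2*μ), hsq]
  -- final combination
  have hm1 : min (f x') (f x'') ≤ f x' := min_le_left _ _
  have hm2 : min (f x') (f x'') ≤ f x'' := min_le_right _ _
  have hscale : 2*μ*(min (f x') (f x'') - f xstar) ≤ ‖u‖^2 := by
    have : 2*μ*(min (f x') (f x'') - f xstar) ≤ 2*μ*(f x' - f xstar) := by
      apply mul_le_mul_of_nonneg_left _ (by positivity : (0:ℝ) ≤ 2*μ)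
      linarith [hm1]
    linarith [hstep3]
  have hfinal : min (f x') (f x'') + μ/L*(min (f x') (f x'') - f xstar) ≤ f x := by
    have ha : 1/(2*L)*(2*μ*(min (f x') (f x'') - f xstar)) ≤ 1/(2*L)*‖u‖^2 :=
      mul_le_mul_of_nonneg_left hscale (by positivity)
    have hb : 1/(2*L)*(2*μ*(min (f x') (f x'') - f xstar))
        = μ/L*(min (f x') (f x'') - f xstar) := by
      field_simp
    rw [hb] at ha
    linarith [hm2, hstep2, ha]
  have hpos : (0:ℝ) < 1 + μ/L := by positivity
  rw [inv_mul_eq_div, le_div_iff₀ hpos]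
  nlinarith [hfinal]
end
end

section
/- In the setting of Algorithm 1 with step h = 1/L and a sign-crossing step, let x' be the projected point (components in I set to 0, others equal to xᵢᵏ). Then f(x') ≤ f(xᵏ) − Σ_{i∈ξ⁰} (hηᵢ − (L/2)h²ηᵢ²) |∂ᵢ⁻f(xᵏ)|², where ηᵢ ∈ [0,1] is as defined via ηᵢ = xᵢᵏ/(h∂ᵢ⁻f(xᵏ)) when ∂ᵢ⁻f(xᵏ) ≠ 0 and ηᵢ = 0 otherwise. In particular f(x') ≤ f(xᵏ). -/
open scoped RealInnerProductSpace BigOperators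
open scoped Classical

noncomputable section

/-- Descent lemma. -/
lemma descent_lemma {n : ℕ} (g : E n → ℝ) (g' : E n → E n)
    (hg' : ∀ z, HasGradientAt g (g' z) z) (L : ℝ) (hL : 0 < L)
    (hLip : ∀ a b, ‖g' a - g' b‖ ≤ L * ‖a - b‖) (x y : E n) :
    g y ≤ g x + (inner ℝ (g' x) (y - x) : ℝ) + L / 2 * ‖y - x‖ ^ 2 := by
  set d := y - x with hd
  have hc : ∀ t : ℝ, HasDerivAt (fun t : ℝ => g (x + t • d))
      ((inner ℝ (g' (x + t • d)) d : ℝ)) t := by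
    intro t
    have h1 : HasDerivAt (fun t : ℝ => x + t • d) d t := by
      simpa using ((hasDerivAt_id t).smul_const d).const_add x
    have h2 : HasFDerivAt g (InnerProductSpace.toDual ℝ (E n) (g' (x + t • d))) (x + t • d) :=
      hasGradientAt_iff_hasFDerivAt.mp (hg' _)
    have := h2.comp_hasDerivAt t h1
    simp only [InnerProductSpace.toDual_apply_apply] at this
    exact this
  set φ : ℝ → ℝ := fun t =>
    g (x + t • d) - t * (inner ℝ (g' x) d : ℝ) - L / 2 * t ^ 2 * ‖d‖ ^ 2 with hφdef
  have hφ : ∀ t : ℝ, HasDerivAt φ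
      ((inner ℝ (g' (x + t • d)) d : ℝ) - (inner ℝ (g' x) d : ℝ) - L * t * ‖d‖ ^ 2) t := by
    intro t
    have h1 : HasDerivAt (fun t : ℝ => t * (inner ℝ (g' x) d : ℝ)) (inner ℝ (g' x) d : ℝ) t :=
      hasDerivAt_mul_const _
    have h2 : HasDerivAt (fun t : ℝ => L / 2 * t ^ 2 * ‖d‖ ^ 2)
        (L * t * ‖d‖ ^ 2) t := by
      have := ((hasDerivAt_pow 2 t).const_mul (L / 2)).mul_const (‖d‖ ^ 2)
      refine this.congr_deriv ?_
      simp only [show (2:ℕ) - 1 = 1 from rfl, pow_one, Nat.cast_ofNat]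
      ring
    exact ((hc t).sub h1).sub h2
  have hmono : AntitoneOn φ (Set.Icc (0:ℝ) 1) := by
    apply antitoneOn_of_deriv_nonpos (convex_Icc 0 1)
    · exact fun t _ => ((hφ t).continuousAt).continuousWithinAt
    · intro t _
      exact ((hφ t).differentiableAt).differentiableWithinAt
    · intro t ht
      rw [interior_Icc] at ht
      rw [(hφ t).deriv]
      have h1 : (inner ℝ (g' (x + t • d)) d : ℝ) - (inner ℝ (g' x) d : ℝ)
          = (inner ℝ (g' (x + t • d) - g' x) d : ℝ) := by
        rw [inner_sub_left]
      have h2 : (inner ℝ (g' (x + t • d) - g' x) d : ℝ) ≤ ‖g' (x + t • d) - g' x‖ * ‖d‖ :=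
        real_inner_le_norm _ _
      have h3 : ‖g' (x + t • d) - g' x‖ ≤ L * (t * ‖d‖) := by
        have := hLip (x + t • d) x
        simpa [norm_smul, abs_of_pos ht.1, mul_assoc] using this
      have h4 : ‖g' (x + t • d) - g' x‖ * ‖d‖ ≤ L * (t * ‖d‖) * ‖d‖ :=
        mul_le_mul_of_nonneg_right h3 (norm_nonneg _)
      nlinarith [norm_nonneg d, h1, h2, h4]
  have := hmono (Set.left_mem_Icc.mpr zero_le_one) (Set.right_mem_Icc.mpr zero_le_one)
      zero_le_one
  have h0 : φ 0 = g x := by simp [hφdef]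
  have h1 : φ 1 = g y - (inner ℝ (g' x) d : ℝ) - L / 2 * ‖d‖ ^ 2 := by
    have hxy : x + (1:ℝ) • d = y := by simp [hd]
    simp only [hφdef, hxy, one_pow, one_mul, mul_one]
  rw [h0, h1] at this
  linarith

/-- The key subgradient coordinate inequality. -/
lemma subgrad_coord {n : ℕ} (g : E n → ℝ) (g' : E n → E n)
    (hg' : ∀ z, HasGradientAt g (g' z) z) (L γ : ℝ) (hL : 0 < L) (hγ : 0 < γ)
    (hLip : ∀ a b, ‖g' a - g' b‖ ≤ L * ‖a - b‖)
    (f : E n → ℝ) (hf : ∀ z, f z = g z + γ * ∑ i, |z i|)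
    (x v : E n) (hv : v ∈ subdiff f x) (i : Fin n) :
    (v i - g' x i) * x i ≤ γ * |x i| := by
  rcases eq_or_ne (x i) 0 with h0 | h0
  · simp [h0]
  · set s : ℝ := if 0 < x i then 1 else -1 with hs
    have hs1 : s * s = 1 := by by_cases h : 0 < x i <;> simp [hs, h]
    have hsx : s * x i = |x i| := by
      by_cases h : 0 < x i
      · simp [hs, h, abs_of_pos h]
      · have hneg : x i < 0 := lt_of_le_of_ne (not_lt.mp h) h0
        simp [hs, h, abs_of_neg hneg]
    have key : ∀ t : ℝ, 0 < t → s * (v i - g' x i) ≤ γ + L / 2 * t := by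
      intro t ht
      set z : E n := x + (t * s) • EuclideanSpace.single i (1:ℝ) with hz
      have hzx : z - x = (t * s) • EuclideanSpace.single i (1:ℝ) := by
        simp [hz]
      have hinner : (inner ℝ v (z - x) : ℝ) = t * s * v i := by
        rw [hzx, real_inner_smul_right]
        have : (inner ℝ v (EuclideanSpace.single i (1:ℝ)) : ℝ) = v i := by
          simpa using EuclideanSpace.inner_single_right (𝕜 := ℝ) i 1 v
        rw [this]
      have hzj : ∀ j, z j = x j + (if j = i then t * s else 0) := by
        intro j
        simp [hz, EuclideanSpace.single_apply]
      have hsabs : |s| = 1 := by by_cases h : 0 < x i <;> simp [hs, h]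
      have hl1 : ∑ j, |z j| ≤ (∑ j, |x j|) + t := by
        have hle : ∀ j ∈ Finset.univ, |z j| ≤ |x j| + (if j = i then t else 0) := by
          intro j _
          rw [hzj j]
          by_cases h : j = i
          · subst h
            simp only [if_pos]
            calc |x j + t * s| ≤ |x j| + |t * s| := abs_add_le _ _
              _ = |x j| + t := by rw [abs_mul, hsabs, abs_of_pos ht]; ring
          · simp [h]
        calc ∑ j, |z j| ≤ ∑ j, (|x j| + (if j = i then t else 0)) :=
              Finset.sum_le_sum hle
          _ = (∑ j, |x j|) + t := by
              rw [Finset.sum_add_distrib, Finset.sum_ite_eq' Finset.univ i (fun _ => t)]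
              simp
      have hnormzx : ‖z - x‖ = t := by
        rw [hzx, norm_smul]
        simp [abs_mul, hsabs, abs_of_pos ht]
      have hsub := hv z
      rw [hf z, hf x, hinner] at hsub
      have hdesc := descent_lemma g g' hg' L hL hLip x z
      have hinner2 : (inner ℝ (g' x) (z - x) : ℝ) = t * s * g' x i := by
        rw [hzx, real_inner_smul_right]
        have : (inner ℝ (g' x) (EuclideanSpace.single i (1:ℝ)) : ℝ) = g' x i := by
          simpa using EuclideanSpace.inner_single_right (𝕜 := ℝ) i 1 (g' x)
        rw [this]
      rw [hinner2, hnormzx] at hdesc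
      -- combine: t*s*v i ≤ g z - g x + γ*t ≤ t*s*g' x i + L/2*t^2 + γ*t
      have hcomb : t * s * v i ≤ t * s * g' x i + L / 2 * t ^ 2 + γ * t := by
        nlinarith [hsub, hdesc, hl1, hγ]
      have h5 : s * (v i - g' x i) * t ≤ (γ + L / 2 * t) * t := by nlinarith [hcomb]
      exact le_of_mul_le_mul_right h5 ht
    have hkey : s * (v i - g' x i) ≤ γ := by
      apply le_of_forall_pos_le_add
      intro ε hε
      have := key (2 * ε / L) (by positivity)
      calc s * (v i - g' x i) ≤ γ + L / 2 * (2 * ε / L) := this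
        _ = γ + ε := by field_simp
    calc (v i - g' x i) * x i = (s * (v i - g' x i)) * (s * x i) := by
          rw [mul_mul_mul_comm, hs1, one_mul]
      _ ≤ γ * (s * x i) := by
          apply mul_le_mul_of_nonneg_right hkey
          rw [hsx]; exact abs_nonneg _
      _ = γ * |x i| := by rw [hsx]

theorem stmt_12 {n : ℕ} (g : E n → ℝ) (hgc : ConvexOn ℝ Set.univ g)
    (hg1 : ContDiff ℝ 1 g) (g' : E n → E n) (hg' : ∀ z, HasGradientAt g (g' z) z)
    (L γ : ℝ) (hL : 0 < L) (hγ : 0 < γ)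
    (hLip : ∀ a b, ‖g' a - g' b‖ ≤ L * ‖a - b‖)
    (f : E n → ℝ) (hf : ∀ z, f z = g z + γ * ∑ i, |z i|)
    (x x' v : E n) (hv : IsMinNormSubgrad f x v)
    (hx' : ∀ i, x' i = if Real.sign ((x i - (1 / L) * v i) * x i) ≤ 0 then 0 else x i)
    (η : Fin n → ℝ)
    (hη : ∀ i, η i = if v i ≠ 0 then x i / ((1 / L) * v i) else 0) :
    f x' ≤ f x - ∑ i ∈ Finset.univ.filter
        (fun i => Real.sign ((x i - (1 / L) * v i) * x i) ≤ 0),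
        ((1 / L) * η i - L / 2 * (1 / L) ^ 2 * (η i) ^ 2) * (v i) ^ 2 ∧
    f x' ≤ f x := by
  set S := Finset.univ.filter
      (fun i => Real.sign ((x i - (1 / L) * v i) * x i) ≤ 0) with hS
  have hmemS : ∀ i, i ∈ S ↔ Real.sign ((x i - (1 / L) * v i) * x i) ≤ 0 := by
    intro i; simp [hS]
  -- sign condition implies product nonpositive
  have hsign_le : ∀ i ∈ S, (x i - (1 / L) * v i) * x i ≤ 0 := by
    intro i hi
    by_contra hpos
    push_neg at hpos
    have h1 := (hmemS i).mp hi
    rw [Real.sign_of_pos hpos] at h1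
    norm_num at h1
  -- key coordinate relation x i = η i * ((1/L) * v i) on S
  have hxη : ∀ i ∈ S, x i = η i * ((1 / L) * v i) := by
    intro i hi
    by_cases hvi : v i = 0
    · have hη0 : η i = 0 := by rw [hη i]; simp [hvi]
      have : x i * x i ≤ 0 := by
        have := hsign_le i hi
        simpa [hvi] using this
      have hx0 : x i = 0 := by nlinarith [sq_nonneg (x i)]
      rw [hx0, hη0]; ring
    · have hc : (1 / L) * v i ≠ 0 := by
        apply mul_ne_zero _ hvi
        positivity
      rw [hη i, if_pos hvi, div_mul_cancel₀ _ hc]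
  -- η ∈ [0,1] on S when v i ≠ 0
  have hη01 : ∀ i ∈ S, 0 ≤ η i ∧ η i ≤ 1 := by
    intro i hi
    by_cases hvi : v i = 0
    · rw [hη i]; simp [hvi]
    · have hc : (1 / L) * v i ≠ 0 := mul_ne_zero (by positivity) hvi
      have hc2 : 0 < ((1 / L) * v i) ^ 2 := by positivity
      have hprod := hsign_le i hi
      rw [hxη i hi] at hprod
      have hq : η i * (η i - 1) ≤ 0 := by nlinarith [hprod, hc2]
      constructor
      · by_contra h; push_neg at h; nlinarith
      · by_contra h; push_neg at h; nlinarith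
  -- each term of the sum is nonneg
  have hterm_nonneg : ∀ i ∈ S,
      0 ≤ ((1 / L) * η i - L / 2 * (1 / L) ^ 2 * (η i) ^ 2) * (v i) ^ 2 := by
    intro i hi
    obtain ⟨h0, h1⟩ := hη01 i hi
    apply mul_nonneg _ (sq_nonneg _)
    have heq : 1 / L * η i - L / 2 * (1 / L) ^ 2 * (η i) ^ 2
        = (η i * (2 - η i)) / (2 * L) := by field_simp
    rw [heq]
    apply div_nonneg (by nlinarith) (by positivity)
  -- descent lemma applied to x'
  have hdesc := descent_lemma g g' hg' L hL hLip x x'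
  have hinner : (inner ℝ (g' x) (x' - x) : ℝ) = ∑ i, g' x i * (x' i - x i) := by
    rw [PiLp.inner_apply]
    apply Finset.sum_congr rfl
    intro i _
    simp [PiLp.sub_apply, RCLike.inner_apply, mul_comm]
  have hnorm : ‖x' - x‖ ^ 2 = ∑ i, (x' i - x i) ^ 2 := by
    rw [← real_inner_self_eq_norm_sq, PiLp.inner_apply]
    apply Finset.sum_congr rfl
    intro i _
    simp [PiLp.sub_apply, RCLike.inner_apply, sq]
  set T : Fin n → ℝ := fun i =>
    g' x i * (x' i - x i) + L / 2 * (x' i - x i) ^ 2 + γ * (|x' i| - |x i|) with hT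
  have hsumT : g x' + γ * ∑ i, |x' i| ≤ g x + γ * ∑ i, |x i| + ∑ i, T i := by
    have hexp : ∑ i, T i = (∑ i, g' x i * (x' i - x i)) + L / 2 * (∑ i, (x' i - x i) ^ 2)
        + γ * ((∑ i, |x' i|) - ∑ i, |x i|) := by
      simp only [hT]
      rw [Finset.sum_add_distrib, Finset.sum_add_distrib, ← Finset.mul_sum,
        ← Finset.mul_sum, Finset.sum_sub_distrib]
    rw [hinner, hnorm] at hdesc
    rw [hexp]
    linarith
  have hTzero : ∀ i ∈ Finset.univ, i ∉ S → T i = 0 := by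
    intro i _ hi
    have hcond : ¬ Real.sign ((x i - (1 / L) * v i) * x i) ≤ 0 := by
      intro h; exact hi ((hmemS i).mpr h)
    have : x' i = x i := by rw [hx' i, if_neg hcond]
    simp only [hT, this]; ring
  have hrestrict : ∑ i, T i = ∑ i ∈ S, T i :=
    (Finset.sum_subset (Finset.subset_univ S) hTzero).symm
  have hTle : ∀ i ∈ S, T i ≤
      -(((1 / L) * η i - L / 2 * (1 / L) ^ 2 * (η i) ^ 2) * (v i) ^ 2) := by
    intro i hi
    have hx'0 : x' i = 0 := by
      rw [hx' i, if_pos ((hmemS i).mp hi)]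
    have hcoord := subgrad_coord g g' hg' L γ hL hγ hLip f hf x v hv.1 i
    have hxi := hxη i hi
    have heq : -(v i) * x i + L / 2 * (x i) ^ 2 =
        -(((1 / L) * η i - L / 2 * (1 / L) ^ 2 * (η i) ^ 2) * (v i) ^ 2) := by
      rw [hxi]
      field_simp
      ring
    have hT' : T i = -(g' x i) * x i + L / 2 * (x i) ^ 2 - γ * |x i| := by
      simp only [hT, hx'0, abs_zero]; ring
    rw [hT', ← heq]
    nlinarith [hcoord]
  have hsum_le : ∑ i ∈ S, T i ≤
      -∑ i ∈ S, ((1 / L) * η i - L / 2 * (1 / L) ^ 2 * (η i) ^ 2) * (v i) ^ 2 := by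
    rw [← Finset.sum_neg_distrib]
    exact Finset.sum_le_sum hTle
  have hmain : f x' ≤ f x - ∑ i ∈ S,
      ((1 / L) * η i - L / 2 * (1 / L) ^ 2 * (η i) ^ 2) * (v i) ^ 2 := by
    rw [hf x', hf x]
    rw [hrestrict] at hsumT
    linarith
  refine ⟨hmain, ?_⟩
  have hnn : 0 ≤ ∑ i ∈ S, ((1 / L) * η i - L / 2 * (1 / L) ^ 2 * (η i) ^ 2) * (v i) ^ 2 :=
    Finset.sum_nonneg hterm_nonneg
  linarith
end
end

section
/- In the setting of the sign-crossing case of Algorithm 1 with step h, let x' be the point with components x'ᵢ = xᵏᵢ for i ∉ ξ⁰ and x'ᵢ = 0 for i ∈ ξ⁰, and let v'' be defined by v''ᵢ = −h∂ᵢ⁻f(xᵏ) for i ∉ ξ⁰ and v''ᵢ = −h∂ᵢ⁻f(x') for i ∈ ξ⁰. Then |v'' + h∂⁻f(x')|₂² ≤ h²|∇g(xᵏ) − ∇g(x')|₂² ≤ h⁴L² Σ_{i∈ξ⁰} ηᵢ²|∂ᵢ⁻f(xᵏ)|². -/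
open scoped RealInnerProductSpace BigOperators
open scoped Classical
open scoped Topology

noncomputable section

lemma norm_sq_eq_sum {n : ℕ} (u : E n) : ‖u‖ ^ 2 = ∑ i, (u i) ^ 2 := by
  rw [EuclideanSpace.norm_eq, Real.sq_sqrt (by positivity)]
  simp [sq_abs]

lemma abs_comp_le_norm {n : ℕ} (u : E n) (i : Fin n) : |u i| ≤ ‖u‖ := by
  have h1 : (u i) ^ 2 ≤ ∑ j, (u j) ^ 2 :=
    Finset.single_le_sum (f := fun j => (u j) ^ 2) (fun j _ => sq_nonneg _)
      (Finset.mem_univ i)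
  nlinarith [norm_sq_eq_sum u, norm_nonneg u, abs_nonneg (u i), sq_abs (u i)]

lemma grad_ineq {n : ℕ} {g : E n → ℝ} (hgc : ConvexOn ℝ Set.univ g)
    {g' : E n → E n} (hg' : ∀ z, HasGradientAt g (g' z) z) (a b : E n) :
    g a + (inner ℝ (g' a) (b - a) : ℝ) ≤ g b := by
  set c : ℝ → E n := fun t => a + t • (b - a) with hc
  have hca : c 0 = a := by simp [hc]
  have hderiv : HasDerivAt (fun t => g (c t)) (inner ℝ (g' a) (b - a) : ℝ) 0 := by
    have h1 : HasDerivAt c (b - a) 0 := by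
      exact (((hasDerivAt_id (0 : ℝ)).smul_const (b - a)).const_add a).congr_deriv (one_smul ℝ _)
    have h2 : HasFDerivAt g (InnerProductSpace.toDual ℝ (E n) (g' a)) (c 0) := by
      rw [hca]; exact (hg' a).hasFDerivAt
    have := h2.comp_hasDerivAt 0 h1
    simp at this; exact this
  have hslope : ∀ t ∈ Set.Ioc (0 : ℝ) 1, slope (fun t => g (c t)) 0 t ≤ g b - g a := by
    intro t ht
    have h01 : (0 : ℝ) ≤ 1 - t := by linarith [ht.2]
    have hcv := hgc.2 (Set.mem_univ a) (Set.mem_univ b) h01 ht.1.le (by ring)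
    have hct : c t = (1 - t) • a + t • b := by
      simp only [hc]; module
    rw [slope_def_field, hca, hct, sub_zero, div_le_iff₀ ht.1]
    simp only [smul_eq_mul] at hcv
    nlinarith [ht.1]
  have htend : Filter.Tendsto (slope (fun t => g (c t)) 0) (𝓝[>] (0 : ℝ))
      (𝓝 (inner ℝ (g' a) (b - a) : ℝ)) :=
    (hasDerivAt_iff_tendsto_slope.mp hderiv).mono_left
      (nhdsWithin_mono _ (fun t ht => Set.mem_compl_singleton_iff.mpr (ne_of_gt ht)))
  have hle : (inner ℝ (g' a) (b - a) : ℝ) ≤ g b - g a :=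
    le_of_tendsto htend (Filter.eventually_of_mem (Ioc_mem_nhdsGT one_pos) hslope)
  linarith

lemma le_of_eps {a b : ℝ} (h : ∀ ε : ℝ, 0 < ε → a ≤ b + ε) : a ≤ b := by
  by_contra hc
  push_neg at hc
  have := h ((a - b) / 2) (by linarith)
  linarith

lemma subgrad_key {n : ℕ} {g : E n → ℝ} {γ : ℝ} {f : E n → ℝ}
    (hf : ∀ z, f z = g z + γ * ∑ i, |z i|)
    {w y : E n} (hy : y ∈ subdiff f w) {i : Fin n} (hwi : w i ≠ 0)
    (t : ℝ) (htlt : |t| < |w i|) :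
    t * y i ≤ g (w + t • (EuclideanSpace.single i 1 : E n)) - g w
      + γ * Real.sign (w i) * t := by
  set z := w + t • (EuclideanSpace.single i 1 : E n) with hz
  have hzj : ∀ j, z j = w j + (if j = i then t else 0) := by
    intro j
    simp [hz, EuclideanSpace.single_apply, mul_ite]
  have habs : |w i + t| = |w i| + Real.sign (w i) * t := by
    have h1 := abs_lt.mp htlt
    rcases hwi.lt_or_gt with hneg | hpos
    · rw [abs_of_neg hneg] at h1
      rw [Real.sign_of_neg hneg, abs_of_neg hneg, abs_of_neg (by linarith)]
      ring
    · rw [abs_of_pos hpos] at h1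
      rw [Real.sign_of_pos hpos, abs_of_pos hpos, abs_of_pos (by linarith)]
      ring
  have hsum : ∑ j, |z j| = (∑ j, |w j|) + Real.sign (w i) * t := by
    have hterm : ∀ j, |z j| = |w j| + (if j = i then Real.sign (w i) * t else 0) := by
      intro j
      by_cases hj : j = i
      · subst hj; rw [hzj, if_pos rfl, if_pos rfl, habs]
      · rw [hzj, if_neg hj, if_neg hj, add_zero, add_zero]
    rw [Finset.sum_congr rfl (fun j _ => hterm j), Finset.sum_add_distrib]
    simp
  have hinner : (inner ℝ y (z - w) : ℝ) = t * y i := by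
    have hzw : z - w = t • (EuclideanSpace.single i 1 : E n) := by simp [hz]
    rw [hzw, real_inner_smul_right]
    have := EuclideanSpace.inner_single_right (𝕜 := ℝ) i 1 y
    simp only [RCLike.star_def, starRingEnd_apply, star_trivial] at this
    rw [this]; ring
  have hsub := hy z
  rw [hf z, hf w, hsum, hinner] at hsub
  linarith

lemma subgrad_comp {n : ℕ} {g : E n → ℝ} (hgc : ConvexOn ℝ Set.univ g)
    {g' : E n → E n} (hg' : ∀ z, HasGradientAt g (g' z) z)
    {L : ℝ} (hL : 0 < L) (hLip : ∀ a b, ‖g' a - g' b‖ ≤ L * ‖a - b‖)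
    {γ : ℝ} {f : E n → ℝ} (hf : ∀ z, f z = g z + γ * ∑ i, |z i|)
    {w y : E n} (hy : y ∈ subdiff f w) {i : Fin n} (hwi : w i ≠ 0) :
    y i = g' w i + γ * Real.sign (w i) := by
  have hwabs : 0 < |w i| := abs_pos.mpr hwi
  have hkey : ∀ t : ℝ, |t| < |w i| →
      t * y i ≤ t * (g' (w + t • (EuclideanSpace.single i 1 : E n)) i)
        + γ * Real.sign (w i) * t := by
    intro t htlt
    have hk := subgrad_key hf hy hwi t htlt
    set z := w + t • (EuclideanSpace.single i 1 : E n) with hz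
    have hg := grad_ineq hgc hg' z w
    have hinner : (inner ℝ (g' z) (w - z) : ℝ) = -(t * g' z i) := by
      have hwz : w - z = (-t) • (EuclideanSpace.single i 1 : E n) := by
        rw [hz, neg_smul]; abel
      rw [hwz, real_inner_smul_right]
      have := EuclideanSpace.inner_single_right (𝕜 := ℝ) i 1 (g' z)
      simp only [RCLike.star_def, starRingEnd_apply, star_trivial] at this
      rw [this]; ring
    rw [hinner] at hg
    linarith
  have hcomp : ∀ t : ℝ, |t| < |w i| →
      |g' (w + t • (EuclideanSpace.single i 1 : E n)) i - g' w i| ≤ L * |t| := by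
    intro t htlt
    set z := w + t • (EuclideanSpace.single i 1 : E n) with hz
    have h1 : |(g' z - g' w) i| ≤ ‖g' z - g' w‖ := abs_comp_le_norm _ i
    have h2 := hLip z w
    have h3 : ‖z - w‖ = |t| := by
      have hzw : z - w = t • (EuclideanSpace.single i 1 : E n) := by simp [hz]
      rw [hzw, norm_smul]; simp [Real.norm_eq_abs]
    have h4 : (g' z - g' w) i = g' z i - g' w i := rfl
    rw [h4] at h1; rw [h3] at h2; linarith
  have hub : y i ≤ g' w i + γ * Real.sign (w i) := by
    apply le_of_eps; intro ε hε
    set t := min (|w i| / 2) (ε / L) with ht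
    have ht0 : 0 < t := lt_min (by linarith) (by positivity)
    have htlt : |t| < |w i| := by
      rw [abs_of_pos ht0]
      calc t ≤ |w i| / 2 := min_le_left _ _
        _ < |w i| := by linarith
    have hk := hkey t htlt
    have hc := hcomp t htlt
    rw [abs_of_pos ht0] at hc
    have hLt : L * t ≤ ε := by
      have h5 : t ≤ ε / L := min_le_right _ _
      calc L * t ≤ L * (ε / L) := by nlinarith
        _ = ε := by field_simp
    have hc2 := (abs_le.mp hc).2
    have hmain : t * y i ≤ t * (g' w i + γ * Real.sign (w i) + ε) := by
      nlinarith [mul_le_mul_of_nonneg_left hc2 ht0.le,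
        mul_le_mul_of_nonneg_left hLt ht0.le]
    exact le_of_mul_le_mul_left hmain ht0
  have hlb : g' w i + γ * Real.sign (w i) ≤ y i := by
    apply le_of_eps; intro ε hε
    set t := -(min (|w i| / 2) (ε / L)) with ht
    have htpos : 0 < min (|w i| / 2) (ε / L) := lt_min (by linarith) (by positivity)
    have ht0 : t < 0 := by rw [ht]; linarith
    have habs : |t| = -t := abs_of_neg ht0
    have htlt : |t| < |w i| := by
      rw [habs, ht, neg_neg]
      calc min (|w i| / 2) (ε / L) ≤ |w i| / 2 := min_le_left _ _
        _ < |w i| := by linarith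
    have hk := hkey t htlt
    have hc := hcomp t htlt
    rw [habs] at hc
    have hLt : L * (-t) ≤ ε := by
      have h5 : -t ≤ ε / L := by rw [ht, neg_neg]; exact min_le_right _ _
      calc L * (-t) ≤ L * (ε / L) := by nlinarith
        _ = ε := by field_simp
    have hc1 := (abs_le.mp hc).1
    set z := w + t • (EuclideanSpace.single i 1 : E n) with hz
    have hdiv : g' z i + γ * Real.sign (w i) ≤ y i := by
      have hmul : (-t) * (g' z i + γ * Real.sign (w i)) ≤ (-t) * y i := by
        nlinarith [hk]
      exact le_of_mul_le_mul_left hmul (by linarith)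
    linarith
  linarith

theorem stmt_13 {n : ℕ} (g : E n → ℝ) (hgc : ConvexOn ℝ Set.univ g)
    (hg1 : ContDiff ℝ 1 g) (g' : E n → E n) (hg' : ∀ z, HasGradientAt g (g' z) z)
    (L γ : ℝ) (hL : 0 < L) (hγ : 0 < γ)
    (hLip : ∀ a b, ‖g' a - g' b‖ ≤ L * ‖a - b‖)
    (f : E n → ℝ) (hf : ∀ z, f z = g z + γ * ∑ i, |z i|)
    (h : ℝ) (hh : 0 < h)
    (x x' v v' v'' : E n)
    (hv : IsMinNormSubgrad f x v)
    (hx' : ∀ i, x' i = if Real.sign ((x i - h * v i) * x i) ≤ 0 then 0 else x i)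
    (hv' : IsMinNormSubgrad f x' v')
    (hv'' : ∀ i, v'' i = if Real.sign ((x i - h * v i) * x i) ≤ 0
        then -(h * v' i) else -(h * v i))
    (η : Fin n → ℝ)
    (hη : ∀ i, η i = if v i ≠ 0 then x i / (h * v i) else 0) :
    ‖v'' + h • v'‖ ^ 2 ≤ h ^ 2 * ‖g' x - g' x'‖ ^ 2 ∧
    h ^ 2 * ‖g' x - g' x'‖ ^ 2 ≤ h ^ 4 * L ^ 2 * ∑ i ∈ Finset.univ.filter
        (fun i => Real.sign ((x i - h * v i) * x i) ≤ 0),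
        (η i) ^ 2 * (v i) ^ 2 := by
  obtain ⟨hvmem, -⟩ := hv
  obtain ⟨hv'mem, -⟩ := hv'
  have hxne : ∀ i, ¬ (Real.sign ((x i - h * v i) * x i) ≤ 0) → x i ≠ 0 := by
    intro i hi hx0
    exact hi (by rw [hx0, mul_zero, Real.sign_zero])
  have hx'eq : ∀ i, ¬ (Real.sign ((x i - h * v i) * x i) ≤ 0) → x' i = x i :=
    fun i hi => by rw [hx' i, if_neg hi]
  have hcomp_v : ∀ i, ¬ (Real.sign ((x i - h * v i) * x i) ≤ 0) →
      v i = g' x i + γ * Real.sign (x i) :=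
    fun i hi => subgrad_comp hgc hg' hL hLip hf hvmem (hxne i hi)
  have hcomp_v' : ∀ i, ¬ (Real.sign ((x i - h * v i) * x i) ≤ 0) →
      v' i = g' x' i + γ * Real.sign (x i) := by
    intro i hi
    have hx'i : x' i = x i := hx'eq i hi
    have := subgrad_comp hgc hg' hL hLip hf hv'mem (i := i)
      (by rw [hx'i]; exact hxne i hi)
    rw [this, hx'i]
  constructor
  · rw [norm_sq_eq_sum, norm_sq_eq_sum, Finset.mul_sum]
    apply Finset.sum_le_sum
    intro i _
    have happ : (v'' + h • v') i = v'' i + h * v' i := rfl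
    have happ2 : (g' x - g' x') i = g' x i - g' x' i := rfl
    rw [happ, happ2, hv'' i]
    by_cases hi : Real.sign ((x i - h * v i) * x i) ≤ 0
    · rw [if_pos hi]
      have hz : (-(h * v' i) + h * v' i) ^ 2 = 0 := by ring
      rw [hz]; positivity
    · rw [if_neg hi]
      have e1 := hcomp_v i hi
      have e2 := hcomp_v' i hi
      have he : -(h * v i) + h * v' i = h * (g' x' i - g' x i) := by
        rw [e1, e2]; ring
      rw [he]
      exact le_of_eq (by ring)
  · have hxx' : ‖x - x'‖ ^ 2 = ∑ i ∈ Finset.univ.filter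
        (fun i => Real.sign ((x i - h * v i) * x i) ≤ 0), (x i) ^ 2 := by
      rw [norm_sq_eq_sum, Finset.sum_filter]
      apply Finset.sum_congr rfl
      intro i _
      have happ : (x - x') i = x i - x' i := rfl
      rw [happ, hx' i]
      by_cases hi : Real.sign ((x i - h * v i) * x i) ≤ 0
      · rw [if_pos hi, if_pos hi]; ring
      · rw [if_neg hi, if_neg hi]; ring
    have hterm : ∀ i ∈ Finset.univ.filter
        (fun i => Real.sign ((x i - h * v i) * x i) ≤ 0),
        (x i) ^ 2 = h ^ 2 * ((η i) ^ 2 * (v i) ^ 2) := by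
      intro i hi
      rw [Finset.mem_filter] at hi
      by_cases hvi : v i = 0
      · have hx0 : x i = 0 := by
          by_contra hx0
          have hpos : 0 < (x i - h * v i) * x i := by
            rw [hvi, mul_zero, sub_zero]
            exact mul_self_pos.mpr hx0
          have hs := Real.sign_of_pos hpos
          rw [hs] at hi
          norm_num at hi
        rw [hx0, hη i, if_neg (by simp [hvi])]
        ring
      · rw [hη i, if_pos hvi]
        have hhv : h * v i ≠ 0 := mul_ne_zero (ne_of_gt hh) hvi
        field_simp
    have hsum2 : ‖x - x'‖ ^ 2 = h ^ 2 * ∑ i ∈ Finset.univ.filter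
        (fun i => Real.sign ((x i - h * v i) * x i) ≤ 0),
        (η i) ^ 2 * (v i) ^ 2 := by
      rw [hxx', Finset.sum_congr rfl hterm, ← Finset.mul_sum]
    have hLn := hLip x x'
    have h1 : ‖g' x - g' x'‖ ^ 2 ≤ L ^ 2 * ‖x - x'‖ ^ 2 := by
      nlinarith [norm_nonneg (g' x - g' x'), norm_nonneg (x - x'), hLn, hL]
    calc h ^ 2 * ‖g' x - g' x'‖ ^ 2 ≤ h ^ 2 * (L ^ 2 * ‖x - x'‖ ^ 2) :=
          mul_le_mul_of_nonneg_left h1 (by positivity)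
      _ = h ^ 4 * L ^ 2 * ∑ i ∈ Finset.univ.filter
          (fun i => Real.sign ((x i - h * v i) * x i) ≤ 0),
          (η i) ^ 2 * (v i) ^ 2 := by rw [hsum2]; ring
end
end

section
/- Let f(x) = g(x) + γ|x|₁ with g : ℝⁿ → ℝ C¹ convex, ∇g L-Lipschitz, γ > 0. Let q, q' ∈ ℝⁿ with sign(qᵢ·q'ᵢ) ≥ 0 for all i, let p = (q' − q)/√h, and define ξ⁺ = {i : qᵢ > 0 or q'ᵢ > 0}, ξ⁻ = {i : qᵢ < 0 or q'ᵢ < 0}, and the vector w with wᵢ = ∂ᵢg(q') + γ for i ∈ ξ⁺, wᵢ = ∂ᵢg(q') − γ for i ∈ ξ⁻, wᵢ = ∂ᵢg(q') otherwise. If ⟨w, p⟩ ≤ 0, then f(q') ≤ f(q). -/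
open scoped RealInnerProductSpace BigOperators
open scoped Classical

noncomputable section

lemma grad_le {n : ℕ} {g : E n → ℝ} (hgc : ConvexOn ℝ Set.univ g) {x v : E n}
    (hx : HasGradientAt g v x) (y : E n) : g x + (inner ℝ v (y - x) : ℝ) ≤ g y := by
  have hc : HasDerivAt (fun t : ℝ => x + t • (y - x)) (y - x) 0 := by
    simpa using ((hasDerivAt_id (0:ℝ)).smul_const (y - x)).const_add x
  have hF : HasFDerivAt g ((InnerProductSpace.toDual ℝ (E n)) v) x :=
    hasGradientAt_iff_hasFDerivAt.mp hx
  have hF' : HasFDerivAt g ((InnerProductSpace.toDual ℝ (E n)) v)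
      ((fun t : ℝ => x + t • (y - x)) 0) := by simpa using hF
  have hd : HasDerivAt (fun t : ℝ => g (x + t • (y - x))) (inner ℝ v (y - x) : ℝ) 0 := by
    have := hF'.comp_hasDerivAt 0 hc
    rw [InnerProductSpace.toDual_apply_apply] at this
    exact this
  have htends : Filter.Tendsto (slope (fun t : ℝ => g (x + t • (y - x))) 0)
      (nhdsWithin 0 (Set.Ioi 0)) (nhds (inner ℝ v (y - x) : ℝ)) :=
    (hasDerivAt_iff_tendsto_slope.mp hd).mono_left
      (nhdsWithin_mono _ (fun t ht => ne_of_gt ht))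
  have hev : ∀ᶠ t in nhdsWithin (0:ℝ) (Set.Ioi 0),
      slope (fun t : ℝ => g (x + t • (y - x))) 0 t ≤ g y - g x := by
    filter_upwards [Ioc_mem_nhdsGT_of_mem (by norm_num : (0:ℝ) ∈ Set.Ico 0 1)]
      with t ht
    have ht0 : 0 < t := ht.1
    have ht1 : t ≤ 1 := ht.2
    have hconv := hgc.2 (Set.mem_univ x) (Set.mem_univ y)
      (by linarith : (0:ℝ) ≤ 1 - t) (le_of_lt ht0) (by ring)
    have heq : (1 - t) • x + t • y = x + t • (y - x) := by
      rw [smul_sub, sub_smul, one_smul]; abel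
    rw [heq] at hconv
    rw [slope_def_field]
    simp only [zero_smul, add_zero, sub_zero]
    rw [div_le_iff₀ ht0]
    simp only [smul_eq_mul] at hconv
    nlinarith
  have := le_of_tendsto htends hev
  linarith

theorem stmt_14 {n : ℕ} (g : E n → ℝ) (hgc : ConvexOn ℝ Set.univ g)
    (hg1 : ContDiff ℝ 1 g) (g' : E n → E n) (hg' : ∀ z, HasGradientAt g (g' z) z)
    (L γ : ℝ) (hL : 0 < L) (hγ : 0 < γ)
    (hLip : ∀ a b, ‖g' a - g' b‖ ≤ L * ‖a - b‖)
    (f : E n → ℝ) (hf : ∀ z, f z = g z + γ * ∑ i, |z i|)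
    (h : ℝ) (hh : 0 < h) (q q' p w : E n)
    (hsign : ∀ i, 0 ≤ Real.sign (q i * q' i))
    (hp : p = (Real.sqrt h)⁻¹ • (q' - q))
    (hw : ∀ i, w i = if 0 < q i ∨ 0 < q' i then g' q' i + γ
        else if q i < 0 ∨ q' i < 0 then g' q' i - γ else g' q' i)
    (hwp : (inner ℝ w p : ℝ) ≤ 0) :
    f q' ≤ f q := by
  have hs : (0:ℝ) < Real.sqrt h := Real.sqrt_pos.mpr hh
  have hgrad : g q' + (inner ℝ (g' q') (q - q') : ℝ) ≤ g q := grad_le hgc (hg' q') q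
  have key : (inner ℝ w (q - q') : ℝ) =
      (inner ℝ (g' q') (q - q') : ℝ) + γ * (∑ i, |q i| - ∑ i, |q' i|) := by
    simp only [PiLp.inner_apply, RCLike.inner_apply, conj_trivial, PiLp.sub_apply,
      ← Finset.sum_sub_distrib, Finset.mul_sum, ← Finset.sum_add_distrib]
    apply Finset.sum_congr rfl
    intro i _
    have hsi := hsign i
    have hmul : 0 ≤ q i * q' i := by
      by_contra hlt
      push_neg at hlt
      rw [Real.sign_of_neg hlt] at hsi; linarith
    rw [hw i]
    by_cases h1 : 0 < q i ∨ 0 < q' i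
    · have hq : 0 ≤ q i := by
        rcases h1 with h1 | h1
        · linarith
        · nlinarith
      have hq' : 0 ≤ q' i := by
        rcases h1 with h1 | h1
        · nlinarith
        · linarith
      rw [if_pos h1, abs_of_nonneg hq, abs_of_nonneg hq']
      ring
    · rw [if_neg h1]
      by_cases h2 : q i < 0 ∨ q' i < 0
      · have hq : q i ≤ 0 := by
          rcases h2 with h2 | h2
          · linarith
          · nlinarith
        have hq' : q' i ≤ 0 := by
          rcases h2 with h2 | h2
          · nlinarith
          · linarith
        rw [if_pos h2, abs_of_nonpos hq, abs_of_nonpos hq']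
        ring
      · push_neg at h1 h2
        have hq : q i = 0 := le_antisymm h1.1 h2.1
        have hq' : q' i = 0 := le_antisymm h1.2 h2.2
        rw [if_neg (by push_neg; exact ⟨h2.1, h2.2⟩), hq, hq']
        simp
  have hqq' : q - q' = (-(Real.sqrt h)) • p := by
    rw [hp, smul_smul, neg_mul, mul_inv_cancel₀ (ne_of_gt hs)]
    simp
  have hwqq : (0:ℝ) ≤ (inner ℝ w (q - q') : ℝ) := by
    rw [hqq', real_inner_smul_right]
    nlinarith
  rw [hf q, hf q']
  nlinarith [key ▸ hwqq]
end
end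

section
/- Let f : ℝⁿ → ℝ be μ-strongly convex with minimizer x*, and suppose points x, x', x'' ∈ ℝⁿ satisfy f(x'') ≤ f(x) − (1/(2L))|∂⁻f(x')|₂² with L ≥ μ > 0. Then min(f(x'), f(x'')) − f(x*) ≤ (1 + μ/L)⁻¹ (f(x) − f(x*)). -/
open scoped RealInnerProductSpace BigOperators
open scoped Classical

noncomputable section

lemma strong_subgrad_ineq {n : ℕ} {μ : ℝ} (hμ : 0 < μ) {f : E n → ℝ}
    (hsc : StronglyConvex μ f) {x v : E n} (hv : v ∈ subdiff f x) (z : E n) :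
    f x + (inner ℝ v (z - x) : ℝ) + μ / 2 * ‖z - x‖ ^ 2 ≤ f z := by
  set w : E n := z - x with hw
  have hz : z = x + w := by simp [hw]
  have key : ∀ t : ℝ, 0 < t → t ≤ 1 →
      (inner ℝ v w : ℝ) + μ / 2 * ‖w‖ ^ 2 ≤ f z - f x + μ / 2 * t * ‖w‖ ^ 2 := by
    intro t ht ht1
    have h1 : 0 ≤ 1 - t := by linarith
    have hconv := hsc.2 (Set.mem_univ x) (Set.mem_univ z) h1 ht.le (by ring)
    have hsub := hv (x + t • w)
    have hpt : (1 - t) • x + t • z = x + t • w := by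
      rw [hz]; module
    rw [hpt] at hconv
    simp only [smul_eq_mul] at hconv
    have hsm : ‖t • w‖ ^ 2 = t ^ 2 * ‖w‖ ^ 2 := by
      rw [norm_smul, mul_pow, Real.norm_eq_abs, sq_abs]
    have hn1 : ‖x + t • w‖ ^ 2 = ‖x‖ ^ 2 + 2 * (t * (inner ℝ x w : ℝ)) + t ^ 2 * ‖w‖ ^ 2 := by
      rw [norm_add_sq_real, real_inner_smul_right, hsm]
    have hn2 : ‖z‖ ^ 2 = ‖x‖ ^ 2 + 2 * (inner ℝ x w : ℝ) + ‖w‖ ^ 2 := by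
      rw [hz, norm_add_sq_real]
    have hinner : (inner ℝ v (x + t • w - x) : ℝ) = t * (inner ℝ v w : ℝ) := by
      rw [add_sub_cancel_left, real_inner_smul_right]
    rw [hinner] at hsub
    rw [hn1, hn2] at hconv
    have hcomb : t * ((inner ℝ v w : ℝ) + μ / 2 * ‖w‖ ^ 2
        - (f z - f x + μ / 2 * t * ‖w‖ ^ 2)) ≤ 0 := by
      nlinarith [hconv, hsub]
    nlinarith [hcomb, ht]
  have main : (inner ℝ v w : ℝ) + μ / 2 * ‖w‖ ^ 2 ≤ f z - f x := by
    refine le_of_forall_pos_le_add ?_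
    intro ε hε
    have hdpos : (0:ℝ) < μ / 2 * ‖w‖ ^ 2 + 1 := by positivity
    set t := min 1 (ε / (μ / 2 * ‖w‖ ^ 2 + 1)) with htdef
    have ht : 0 < t := lt_min one_pos (div_pos hε hdpos)
    have ht1 : t ≤ 1 := min_le_left _ _
    have htd : t ≤ ε / (μ / 2 * ‖w‖ ^ 2 + 1) := min_le_right _ _
    have h2 : μ / 2 * t * ‖w‖ ^ 2 ≤ ε := by
      have h3 : t * (μ / 2 * ‖w‖ ^ 2 + 1) ≤ ε := by
        rw [← le_div_iff₀ hdpos]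
        exact htd
      nlinarith [ht, h3]
    have := key t ht ht1
    linarith
  linarith

theorem stmt_19 {n : ℕ} (μ L : ℝ) (hμ : 0 < μ) (hμL : μ ≤ L)
    (f : E n → ℝ) (hfc : ConvexOn ℝ Set.univ f) (hsc : StronglyConvex μ f)
    (xstar : E n) (hmin : ∀ z, f xstar ≤ f z)
    (x x' x'' v' : E n) (hv' : IsMinNormSubgrad f x' v')
    (hdec : f x'' ≤ f x - 1 / (2 * L) * ‖v'‖ ^ 2) :
    min (f x') (f x'') - f xstar ≤ (1 + μ / L)⁻¹ * (f x - f xstar) := by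
  have hL : 0 < L := hμ.trans_le hμL
  -- PL inequality
  have hss := strong_subgrad_ineq hμ hsc hv'.1 xstar
  have habs : (inner ℝ v' (xstar - x') : ℝ) ≥ -(‖v'‖ * ‖xstar - x'‖) := by
    have := abs_real_inner_le_norm v' (xstar - x')
    have := abs_le.mp this
    linarith [this.1]
  have hPL : 2 * μ * (f x' - f xstar) ≤ ‖v'‖ ^ 2 := by
    nlinarith [sq_nonneg (μ * ‖xstar - x'‖ - ‖v'‖), hμ, habs, hss]
  set m := min (f x') (f x'') with hm
  have h1 : m ≤ f x'' := min_le_right _ _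
  have h4 : m ≤ f x' := min_le_left _ _
  have hfx' : f xstar ≤ f x' := hmin x'
  have hstep : f x'' ≤ f x - μ / L * (f x' - f xstar) := by
    have h5 : μ / L * (f x' - f xstar) ≤ 1 / (2 * L) * ‖v'‖ ^ 2 := by
      rw [div_mul_eq_mul_div, div_le_iff₀ hL, one_div, inv_mul_eq_div,
        div_mul_eq_mul_div, le_div_iff₀ (by positivity : (0:ℝ) < 2 * L)]
      nlinarith [hPL]
    linarith
  have hpos : 0 < 1 + μ / L := by positivity
  rw [inv_mul_eq_div, le_div_iff₀ hpos]
  have hmul : μ / L * (m - f xstar) ≤ μ / L * (f x' - f xstar) :=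
    mul_le_mul_of_nonneg_left (by linarith) (by positivity)
  nlinarith [h1, hstep, hmul]
end
end
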